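/- arXiv:1311.2237 — 5 statements merged into one kernel-verified Lean document; each statement's English description precedes it below -/
import Mathlib

section
/- Let β > 0, n ≥ 1, σ₁,…,σ_n ∈ ℝ and x₁,…,x_n ∈ Λ. Then lim_{m→0⁺} E_{m,β}[exp(i Σ_{j=1}^n σ_j φ_{x_j})] = exp(−(β/2) Σ_{i,j=1}^n σ_iσ_j W_Λ(x_i−x_j|0)) if σ₁+⋯+σ_n = 0, and lim_{m→0⁺} E_{m,β}[exp(i Σ_{j=1}^n σ_j φ_{x_j})] = 0 otherwise. -/
open scoped BigOperators
open Filter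

/-- The square lattice torus `Λ` of side `L^R` (`L` odd): integer points `x`
with `max |x₀| |x₁| < L^R / 2`. -/
noncomputable def Lam (L R : ℕ) : Finset (ℤ × ℤ) :=
  ((Finset.Icc (-(L : ℤ) ^ R) ((L : ℤ) ^ R)) ×ˢ
      (Finset.Icc (-(L : ℤ) ^ R) ((L : ℤ) ^ R))).filter
    (fun x => 2 * |x.1| < (L : ℤ) ^ R ∧ 2 * |x.2| < (L : ℤ) ^ R)

/-- Dot product `k·x` where `k = (2π/L^R) n` is a reciprocal lattice vector. -/
noncomputable def kdot (L R : ℕ) (n x : ℤ × ℤ) : ℝ :=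
  (2 * Real.pi / (L : ℝ) ^ R) * ((n.1 : ℝ) * (x.1 : ℝ) + (n.2 : ℝ) * (x.2 : ℝ))

/-- Fourier symbol `Δ̂(k)` of the lattice Laplacian at `k = (2π/L^R) n`. -/
noncomputable def hatDelta (L R : ℕ) (n : ℤ × ℤ) : ℝ :=
  -2 * ((1 - Real.cos (2 * Real.pi * (n.1 : ℝ) / (L : ℝ) ^ R)) +
        (1 - Real.cos (2 * Real.pi * (n.2 : ℝ) / (L : ℝ) ^ R)))

/-- The two-dimensional electrostatic potential `W_Λ(x|0)`. -/
noncomputable def Wfree (L R : ℕ) (x : ℤ × ℤ) : ℝ :=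
  (((Lam L R).card : ℝ))⁻¹ *
    ∑ n ∈ (Lam L R).erase (0, 0),
      ((Complex.exp (Complex.I * (kdot L R n x : ℂ)) - 1) / (-(hatDelta L R n : ℂ))).re

/-- Neutral configurations of `n` charged (`±1`) particles in `Λ`. -/
noncomputable def Omega0 (L R n : ℕ) : Finset (Fin n → ℤ × (ℤ × ℤ)) :=
  (Fintype.piFinset fun _ : Fin n => ({-1, 1} : Finset ℤ) ×ˢ Lam L R).filter
    (fun ω => ∑ j, (ω j).1 = 0)

/-- Coulomb energy `H_Λ(ω)` of a configuration. -/
noncomputable def energy (L R : ℕ) {n : ℕ} (ω : Fin n → ℤ × (ℤ × ℤ)) : ℝ :=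
  ∑ i : Fin n, ∑ j ∈ Finset.Ioi i,
    (((ω i).1 * (ω j).1 : ℤ) : ℝ) * Wfree L R ((ω i).2 - (ω j).2)

/-- Energy `H_Λ(ω ∧ {p₁,p₂})` of a configuration augmented by probes of charge `η`
at `x` and `-η` at `y`. -/
noncomputable def energyP (L R : ℕ) (η : ℝ) (x y : ℤ × ℤ) {n : ℕ}
    (ω : Fin n → ℤ × (ℤ × ℤ)) : ℝ :=
  energy L R ω
    + η * ∑ j, (((ω j).1 : ℤ) : ℝ) * (Wfree L R ((ω j).2 - x) - Wfree L R ((ω j).2 - y))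
    - η ^ 2 * Wfree L R (x - y)

/-- Grand canonical partition function `Z_Λ(β,z)`. -/
noncomputable def Zgc (L R : ℕ) (β z : ℝ) : ℝ :=
  ∑' n : ℕ, (z ^ n / (n.factorial : ℝ)) *
    ∑ ω ∈ Omega0 L R n, Real.exp (-β * energy L R ω)

/-- Partition function `Z^{p₁,p₂}_Λ(β,z)` with two fractional-charge probes. -/
noncomputable def Zprobe (L R : ℕ) (β z η : ℝ) (x y : ℤ × ℤ) : ℝ :=
  ∑' n : ℕ, (z ^ n / (n.factorial : ℝ)) *
    ∑ ω ∈ Omega0 L R n, Real.exp (-β * energyP L R η x y ω)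

/-- The constant `c_E = −(2γ_E + ln 8)/(4π)`. -/
noncomputable def cE : ℝ :=
  -(2 * Real.eulerMascheroniConstant + Real.log 8) / (4 * Real.pi)

/-- Euclidean norm of a point of `ℤ²`. -/
noncomputable def znorm (x : ℤ × ℤ) : ℝ :=
  Real.sqrt ((x.1 : ℝ) ^ 2 + (x.2 : ℝ) ^ 2)

/-- Yukawa potential `W_Λ(x;m)`. -/
noncomputable def Wyuk (L R : ℕ) (m : ℝ) (x : ℤ × ℤ) : ℂ :=
  (((Lam L R).card : ℂ))⁻¹ *
    ∑ n ∈ Lam L R,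
      Complex.exp (Complex.I * (kdot L R n x : ℂ)) / ((m ^ 2 - hatDelta L R n : ℝ) : ℂ)

open MeasureTheory

/-- `μ` is the centered Gaussian measure on fields `φ : ℤ² → ℝ` (supported on `Λ`)
with covariance matrix `β W_Λ(x−y;m)`, characterized through its characteristic
function. -/
def IsGaussianCov (L R : ℕ) (β m : ℝ) (μ : Measure ((ℤ × ℤ) → ℝ)) : Prop :=
  IsProbabilityMeasure μ ∧
  ∀ t : (ℤ × ℤ) → ℝ, (∀ x : ℤ × ℤ, x ∉ Lam L R → t x = 0) →
    (∫ φ : (ℤ × ℤ) → ℝ,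
        Complex.exp (Complex.I * ((∑ x ∈ Lam L R, t x * φ x : ℝ) : ℂ)) ∂μ) =
      Complex.exp
        (-(((β / 2) *
            ∑ x ∈ Lam L R, ∑ y ∈ Lam L R,
              t x * t y * (Wyuk L R m (x - y)).re : ℝ) : ℂ))

section AuxStatement5

lemma lam_zero_mem (L R : ℕ) (hL : 1 < L) : ((0, 0) : ℤ × ℤ) ∈ Lam L R := by
  have h : (0 : ℤ) < (L : ℤ) ^ R := by
    have : (1 : ℤ) < (L : ℤ) := by exact_mod_cast hL
    positivity
  simp [Lam, Finset.mem_filter, Finset.mem_product, Finset.mem_Icc, h, h.le,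
    neg_nonpos.mpr h.le]

lemma lam_card_pos (L R : ℕ) (hL : 1 < L) : 0 < (Lam L R).card :=
  Finset.card_pos.mpr ⟨_, lam_zero_mem L R hL⟩

lemma hatDelta_zero (L R : ℕ) : hatDelta L R ((0, 0) : ℤ × ℤ) = 0 := by
  simp [hatDelta]

lemma kdot_zero (L R : ℕ) (y : ℤ × ℤ) : kdot L R ((0, 0) : ℤ × ℤ) y = 0 := by
  simp [kdot]

lemma cos_term_lt_one (L R : ℕ) (hL : 1 < L) {a : ℤ} (ha : a ≠ 0)
    (hab : 2 * |a| < (L : ℤ) ^ R) :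
    Real.cos (2 * Real.pi * (a : ℝ) / (L : ℝ) ^ R) < 1 := by
  have hL' : (0 : ℝ) < (L : ℝ) := by exact_mod_cast Nat.lt_of_lt_of_le Nat.zero_lt_one hL.le
  have hP : (0 : ℝ) < (L : ℝ) ^ R := by positivity
  set θ : ℝ := 2 * Real.pi * (a : ℝ) / (L : ℝ) ^ R with hθ
  have hapos : (0 : ℝ) < |(a : ℝ)| := abs_pos.mpr (by exact_mod_cast ha)
  have habs : |θ| = 2 * Real.pi * |(a : ℝ)| / (L : ℝ) ^ R := by
    rw [hθ, abs_div, abs_of_pos hP, abs_mul,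
      abs_of_pos (by positivity : (0 : ℝ) < 2 * Real.pi)]
  have hcast : 2 * |(a : ℝ)| < (L : ℝ) ^ R := by
    have := hab
    push_cast [← Int.cast_abs] at *
    exact_mod_cast this
  have h1 : 0 < |θ| := by rw [habs]; positivity
  have h2 : |θ| < Real.pi := by
    rw [habs, div_lt_iff₀ hP]
    nlinarith [Real.pi_pos]
  calc Real.cos θ = Real.cos |θ| := (Real.cos_abs θ).symm
    _ < Real.cos 0 := Real.cos_lt_cos_of_nonneg_of_le_pi le_rfl h2.le h1
    _ = 1 := Real.cos_zero

lemma hatDelta_neg (L R : ℕ) (hL : 1 < L) {n : ℤ × ℤ}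
    (hn : n ∈ (Lam L R).erase ((0, 0) : ℤ × ℤ)) : hatDelta L R n < 0 := by
  obtain ⟨hne, hmem⟩ := Finset.mem_erase.mp hn
  rw [Lam, Finset.mem_filter] at hmem
  obtain ⟨-, h1, h2⟩ := hmem
  have hc1 : Real.cos (2 * Real.pi * (n.1 : ℝ) / (L : ℝ) ^ R) ≤ 1 := Real.cos_le_one _
  have hc2 : Real.cos (2 * Real.pi * (n.2 : ℝ) / (L : ℝ) ^ R) ≤ 1 := Real.cos_le_one _
  have hor : n.1 ≠ 0 ∨ n.2 ≠ 0 := by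
    by_contra h
    push_neg at h
    exact hne (Prod.ext h.1 h.2)
  rcases hor with h | h
  · have := cos_term_lt_one L R hL h h1
    rw [hatDelta]; nlinarith
  · have := cos_term_lt_one L R hL h h2
    rw [hatDelta]; nlinarith

lemma denom_pos (L R : ℕ) (hL : 1 < L) (m : ℝ) {n : ℤ × ℤ}
    (hn : n ∈ (Lam L R).erase ((0, 0) : ℤ × ℤ)) : 0 < m ^ 2 - hatDelta L R n := by
  have := hatDelta_neg L R hL hn
  nlinarith [sq_nonneg m]

/-- The massive potential with the zero mode removed. -/
noncomputable def wbar (L R : ℕ) (m : ℝ) (y : ℤ × ℤ) : ℝ :=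
  (((Lam L R).card : ℝ))⁻¹ *
    ∑ n ∈ (Lam L R).erase ((0, 0) : ℤ × ℤ),
      (Complex.exp (Complex.I * (kdot L R n y : ℂ)) /
        ((m ^ 2 - hatDelta L R n : ℝ) : ℂ)).re

lemma Wyuk_re_eq (L R : ℕ) (hL : 1 < L) (m : ℝ) (y : ℤ × ℤ) :
    (Wyuk L R m y).re = (((Lam L R).card : ℝ))⁻¹ * (m ^ 2)⁻¹ + wbar L R m y := by
  have h0 : ((0, 0) : ℤ × ℤ) ∈ Lam L R := lam_zero_mem L R hL
  rw [Wyuk, ← Finset.add_sum_erase _ _ h0, kdot_zero, hatDelta_zero]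
  have hz : Complex.exp (Complex.I * ((0 : ℝ) : ℂ)) /
      ((m ^ 2 - 0 : ℝ) : ℂ) = (((m ^ 2)⁻¹ : ℝ) : ℂ) := by
    push_cast
    simp [div_eq_mul_inv]
  rw [hz]
  rw [show (((Lam L R).card : ℂ)) = ((((Lam L R).card : ℝ)) : ℂ) from by norm_cast,
    ← Complex.ofReal_inv, Complex.re_ofReal_mul, Complex.add_re, Complex.ofReal_re, Complex.re_sum,
    mul_add, wbar]

lemma wbar_continuous (L R : ℕ) (hL : 1 < L) (y : ℤ × ℤ) :
    Continuous fun m : ℝ => wbar L R m y := by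
  apply Continuous.mul continuous_const
  apply continuous_finset_sum
  intro p hp
  apply Complex.continuous_re.comp
  apply Continuous.div continuous_const
  · exact Complex.continuous_ofReal.comp ((continuous_pow 2).sub continuous_const)
  · intro m
    exact Complex.ofReal_ne_zero.mpr (ne_of_gt (denom_pos L R hL m hp))

lemma wbar_zero (L R : ℕ) (hL : 1 < L) (y : ℤ × ℤ) :
    wbar L R 0 y = Wfree L R y +
      (((Lam L R).card : ℝ))⁻¹ *
        ∑ n ∈ (Lam L R).erase ((0, 0) : ℤ × ℤ), (-(hatDelta L R n))⁻¹ := by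
  rw [wbar, Wfree, ← mul_add, ← Finset.sum_add_distrib]
  congr 1
  apply Finset.sum_congr rfl
  intro p hp
  have hd : (((0 : ℝ) ^ 2 - hatDelta L R p : ℝ) : ℂ) = -((hatDelta L R p : ℝ) : ℂ) := by
    push_cast; ring
  rw [hd]
  have hne : -((hatDelta L R p : ℝ) : ℂ) ≠ 0 := by
    rw [← Complex.ofReal_neg]
    exact Complex.ofReal_ne_zero.mpr (ne_of_gt (by nlinarith [hatDelta_neg L R hL hp]))
  have hsplit : Complex.exp (Complex.I * (kdot L R p y : ℂ)) / -((hatDelta L R p : ℝ) : ℂ)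
      = (Complex.exp (Complex.I * (kdot L R p y : ℂ)) - 1) / -((hatDelta L R p : ℝ) : ℂ)
        + 1 / -((hatDelta L R p : ℝ) : ℂ) := by
    rw [← add_div, sub_add_cancel]
  rw [hsplit, Complex.add_re]
  congr 1
  rw [one_div, ← Complex.ofReal_neg, ← Complex.ofReal_inv, Complex.ofReal_re]

lemma delta_sum {nn : ℕ} (s : Finset (ℤ × ℤ)) (x : Fin nn → ℤ × ℤ)
    (hx : ∀ j, x j ∈ s) (σ : Fin nn → ℝ) (f : ℤ × ℤ → ℝ) :
    ∑ y ∈ s, (∑ j, if x j = y then σ j else 0) * f y = ∑ j, σ j * f (x j) := by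
  simp only [Finset.sum_mul, ite_mul, zero_mul]
  rw [Finset.sum_comm]
  refine Finset.sum_congr rfl fun j _ => ?_
  rw [Finset.sum_ite_eq s (x j) (fun y => σ j * f y), if_pos (hx j)]

lemma delta_sum2 {nn : ℕ} (s : Finset (ℤ × ℤ)) (x : Fin nn → ℤ × ℤ)
    (hx : ∀ j, x j ∈ s) (σ : Fin nn → ℝ) (W : ℤ × ℤ → ℤ × ℤ → ℝ) :
    ∑ y ∈ s, ∑ z ∈ s,
        (∑ j, if x j = y then σ j else 0) * (∑ j, if x j = z then σ j else 0) * W y z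
      = ∑ i, ∑ j, σ i * σ j * W (x i) (x j) := by
  calc ∑ y ∈ s, ∑ z ∈ s,
        (∑ j, if x j = y then σ j else 0) * (∑ j, if x j = z then σ j else 0) * W y z
      = ∑ y ∈ s, (∑ j, if x j = y then σ j else 0) *
          ∑ z ∈ s, (∑ j, if x j = z then σ j else 0) * W y z := by
        refine Finset.sum_congr rfl fun y _ => ?_
        rw [Finset.mul_sum]
        exact Finset.sum_congr rfl fun z _ => mul_assoc _ _ _
    _ = ∑ y ∈ s, (∑ j, if x j = y then σ j else 0) * ∑ j, σ j * W y (x j) := by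
        refine Finset.sum_congr rfl fun y _ => ?_
        rw [delta_sum s x hx σ (W y)]
    _ = ∑ i, σ i * ∑ j, σ j * W (x i) (x j) :=
        delta_sum s x hx σ (fun y => ∑ j, σ j * W y (x j))
    _ = ∑ i, ∑ j, σ i * σ j * W (x i) (x j) := by
        refine Finset.sum_congr rfl fun i _ => ?_
        rw [Finset.mul_sum]
        exact Finset.sum_congr rfl fun j _ => (mul_assoc _ _ _).symm

lemma sum_sum_mul_const {nn : ℕ} (σ : Fin nn → ℝ) (K : ℝ) :
    ∑ i, ∑ j, σ i * σ j * K = (∑ j, σ j) ^ 2 * K := by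
  rw [sq, Finset.sum_mul_sum, Finset.sum_mul]
  exact Finset.sum_congr rfl fun i _ => by rw [Finset.sum_mul]

end AuxStatement5

/-- Limit as `m → 0⁺` of Gaussian characteristic functions: it is the
Boltzmann weight of the electrostatic energy for neutral charge assignments, and `0`
for non-neutral ones. -/
theorem statement5 (L R : ℕ) (hLodd : Odd L) (hL : 1 < L) (hR : 1 ≤ R)
    (β : ℝ) (hβ : 0 < β)
    (μ : ℝ → Measure ((ℤ × ℤ) → ℝ))
    (hμ : ∀ m : ℝ, 0 < m → IsGaussianCov L R β m (μ m))
    (n : ℕ) (hn : 1 ≤ n) (σ : Fin n → ℝ) (x : Fin n → ℤ × ℤ)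
    (hx : ∀ j, x j ∈ Lam L R) :
    ((∑ j, σ j) = 0 →
      Filter.Tendsto
        (fun m : ℝ => ∫ φ : (ℤ × ℤ) → ℝ,
          Complex.exp (Complex.I * ((∑ j, σ j * φ (x j) : ℝ) : ℂ)) ∂(μ m))
        (nhdsWithin 0 (Set.Ioi 0))
        (nhds ((Real.exp (-(β / 2) *
          ∑ i, ∑ j, σ i * σ j * Wfree L R (x i - x j)) : ℝ) : ℂ))) ∧
    ((∑ j, σ j) ≠ 0 →
      Filter.Tendsto
        (fun m : ℝ => ∫ φ : (ℤ × ℤ) → ℝ,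
          Complex.exp (Complex.I * ((∑ j, σ j * φ (x j) : ℝ) : ℂ)) ∂(μ m))
        (nhdsWithin 0 (Set.Ioi 0)) (nhds 0)) := by
  classical
  have hc : (0 : ℝ) < ((Lam L R).card : ℝ) := by exact_mod_cast lam_card_pos L R hL
  set c : ℝ := ((Lam L R).card : ℝ) with hc_def
  set S : ℝ → ℝ := fun m => ∑ i, ∑ j, σ i * σ j * (Wyuk L R m (x i - x j)).re with hS_def
  set T : ℝ → ℝ := fun m => ∑ i, ∑ j, σ i * σ j * wbar L R m (x i - x j) with hT_def
  have hchar : ∀ m : ℝ, 0 < m →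
      (∫ φ : (ℤ × ℤ) → ℝ,
        Complex.exp (Complex.I * ((∑ j, σ j * φ (x j) : ℝ) : ℂ)) ∂(μ m))
        = Complex.exp (-(((β / 2) * S m : ℝ) : ℂ)) := by
    intro m hm
    obtain ⟨_, h2⟩ := hμ m hm
    have h2' := h2 (fun y => ∑ j, if x j = y then σ j else 0)
      (fun y hy => Finset.sum_eq_zero fun j _ => if_neg (fun h : x j = y => hy (h ▸ hx j)))
    calc (∫ φ : (ℤ × ℤ) → ℝ,
          Complex.exp (Complex.I * ((∑ j, σ j * φ (x j) : ℝ) : ℂ)) ∂(μ m))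
        = (∫ φ : (ℤ × ℤ) → ℝ,
            Complex.exp (Complex.I *
              ((∑ y ∈ Lam L R, (∑ j, if x j = y then σ j else 0) * φ y : ℝ) : ℂ)) ∂(μ m)) := by
          simp only [delta_sum (Lam L R) x hx σ]
      _ = Complex.exp (-(((β / 2) *
            ∑ y ∈ Lam L R, ∑ z ∈ Lam L R,
              (∑ j, if x j = y then σ j else 0) * (∑ j, if x j = z then σ j else 0) *
                (Wyuk L R m (y - z)).re : ℝ) : ℂ)) := h2'
      _ = Complex.exp (-(((β / 2) * S m : ℝ) : ℂ)) := by
          rw [delta_sum2 (Lam L R) x hx σ (fun y z => (Wyuk L R m (y - z)).re)]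
  have hSdecomp : ∀ m : ℝ, S m = (∑ j, σ j) ^ 2 * (c⁻¹ * (m ^ 2)⁻¹) + T m := by
    intro m
    simp only [hS_def, hT_def]
    simp only [Wyuk_re_eq L R hL m, ← hc_def, mul_add, Finset.sum_add_distrib]
    rw [sum_sum_mul_const σ (c⁻¹ * (m ^ 2)⁻¹)]
  have hTcont : Continuous T := by
    rw [hT_def]
    exact continuous_finset_sum _ fun i _ => continuous_finset_sum _ fun j _ =>
      continuous_const.mul (wbar_continuous L R hL _)
  constructor
  · -- neutral case
    intro h0
    have hT0 : T 0 = ∑ i, ∑ j, σ i * σ j * Wfree L R (x i - x j) := by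
      simp only [hT_def]
      simp only [wbar_zero L R hL, mul_add, Finset.sum_add_distrib]
      rw [sum_sum_mul_const σ, h0]
      ring
    have hTlim : Tendsto T (nhdsWithin 0 (Set.Ioi 0)) (nhds (T 0)) :=
      (hTcont.tendsto 0).mono_left nhdsWithin_le_nhds
    have hg : Continuous fun r : ℝ => Complex.exp (-(((β / 2) * r : ℝ) : ℂ)) :=
      Complex.continuous_exp.comp
        ((Complex.continuous_ofReal.comp (continuous_const.mul continuous_id)).neg)
    have hlim : Tendsto (fun m => Complex.exp (-(((β / 2) * T m : ℝ) : ℂ)))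
        (nhdsWithin 0 (Set.Ioi 0)) (nhds (Complex.exp (-(((β / 2) * T 0 : ℝ) : ℂ)))) := by
      have := (hg.tendsto (T 0)).comp hTlim
      simpa [Function.comp_def] using this
    have htarget : ((Real.exp (-(β / 2) *
        ∑ i, ∑ j, σ i * σ j * Wfree L R (x i - x j)) : ℝ) : ℂ)
        = Complex.exp (-(((β / 2) * T 0 : ℝ) : ℂ)) := by
      rw [Complex.ofReal_exp]
      congr 1
      rw [hT0]
      push_cast
      ring
    rw [htarget]
    refine Tendsto.congr' ?_ hlim
    refine Filter.eventuallyEq_of_mem self_mem_nhdsWithin fun m hm => ?_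
    have hm' : (0 : ℝ) < m := hm
    have hST : S m = T m := by rw [hSdecomp m, h0]; ring
    rw [hchar m hm', hST]
  · -- non-neutral case
    intro h0
    have hsq : 0 < (∑ j, σ j) ^ 2 :=
      lt_of_le_of_ne (sq_nonneg _) (Ne.symm (pow_ne_zero 2 h0))
    have hm2 : Tendsto (fun m : ℝ => (m ^ 2)⁻¹) (nhdsWithin 0 (Set.Ioi 0)) atTop := by
      apply tendsto_inv_nhdsGT_zero.comp
      rw [tendsto_nhdsWithin_iff]
      constructor
      · have := ((continuous_pow 2).tendsto (0 : ℝ)).mono_left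
          (nhdsWithin_le_nhds (s := Set.Ioi (0:ℝ)))
        simpa using this
      · exact Filter.eventually_of_mem self_mem_nhdsWithin fun m hm => Set.mem_Ioi.mpr (pow_pos hm 2)
    have hA : -(β / 2) * ((∑ j, σ j) ^ 2 * c⁻¹) < 0 := by
      have h1 : 0 < (β / 2) * ((∑ j, σ j) ^ 2 * c⁻¹) :=
        mul_pos (by linarith) (mul_pos hsq (inv_pos.mpr hc))
      linarith
    have hbot : Tendsto (fun m => -((β / 2) * S m)) (nhdsWithin 0 (Set.Ioi 0)) atBot := by
      have h1 : Tendsto (fun m : ℝ => (-(β / 2) * ((∑ j, σ j) ^ 2 * c⁻¹)) * (m ^ 2)⁻¹)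
          (nhdsWithin 0 (Set.Ioi 0)) atBot := hm2.const_mul_atTop_of_neg hA
      have h2 : Tendsto (fun m => -(β / 2) * T m) (nhdsWithin 0 (Set.Ioi 0))
          (nhds (-(β / 2) * T 0)) :=
        ((continuous_const.mul hTcont).tendsto 0).mono_left nhdsWithin_le_nhds
      refine (h1.atBot_add h2).congr fun m => ?_
      rw [hSdecomp m]
      ring
    have hexp : Tendsto (fun m => Real.exp (-((β / 2) * S m)))
        (nhdsWithin 0 (Set.Ioi 0)) (nhds 0) := Real.tendsto_exp_atBot.comp hbot
    have hC : Tendsto (fun m => Complex.exp (-(((β / 2) * S m : ℝ) : ℂ)))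
        (nhdsWithin 0 (Set.Ioi 0)) (nhds 0) := by
      have heq : (fun m => Complex.exp (-(((β / 2) * S m : ℝ) : ℂ)))
          = Complex.ofReal ∘ (fun m => Real.exp (-((β / 2) * S m))) := by
        funext m
        rw [Function.comp_apply, Complex.ofReal_exp, Complex.ofReal_neg]
      rw [heq]
      have h3 := (Complex.continuous_ofReal.tendsto 0).comp hexp
      simpa using h3
    refine Tendsto.congr' ?_ hC
    exact Filter.eventuallyEq_of_mem self_mem_nhdsWithin fun m hm => (hchar m hm).symm
end

section
/- Let q ∈ (0,1] and define q_j := q/(1 + q(j−1)) for integers j ≥ 1. Then the limit c₀ := lim_{j→∞} (Σ_{k=1}^j q_k − ln(1 + qj)) exists, satisfies 0 ≤ c₀ ≤ q, and for every j ≥ 1 one has |Σ_{k=1}^j q_k − ln(1 + qj) − c₀| ≤ q_j. -/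
section aux
variable (q : ℝ)

noncomputable def sgd (i : ℕ) : ℝ := q / (1 + q * i)
noncomputable def sgg (i : ℕ) : ℝ := sgd q i - Real.log (1 + sgd q i)

lemma sgpos (hq0 : 0 < q) (i : ℕ) : 0 < 1 + q * i := by positivity

lemma sgd_pos (hq0 : 0 < q) (i : ℕ) : 0 < sgd q i := by
  unfold sgd; positivity

lemma sgg_nonneg (hq0 : 0 < q) (i : ℕ) : 0 ≤ sgg q i := by
  have h := Real.log_le_sub_one_of_pos (x := 1 + sgd q i) (by have := sgd_pos q hq0 i; linarith)
  unfold sgg; linarith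

lemma sgg_le (hq0 : 0 < q) (i : ℕ) :
    sgg q i ≤ q * ((1 + q * i)⁻¹ - (1 + q * (i + 1 : ℕ))⁻¹) := by
  have hd := sgd_pos q hq0 i
  have h1 : (0:ℝ) < 1 + sgd q i := by linarith
  have hlog := Real.one_sub_inv_le_log_of_pos h1
  have hp := sgpos q hq0 i
  have hp1 := sgpos q hq0 (i + 1)
  have key : sgd q i - (1 - (1 + sgd q i)⁻¹) = q * ((1 + q * i)⁻¹ - (1 + q * (i + 1 : ℕ))⁻¹) := by
    unfold sgd
    have h2 : 1 + q / (1 + q * i) = (1 + q * (i + 1 : ℕ)) / (1 + q * i) := by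
      push_cast; field_simp; ring
    rw [h2]
    push_cast
    rw [inv_div]
    field_simp
    ring
  have : sgg q i ≤ sgd q i - (1 - (1 + sgd q i)⁻¹) := by unfold sgg; linarith
  linarith [key ▸ this]

lemma sg_tel (hq0 : 0 < q) (j N : ℕ) (h : j ≤ N) :
    (∑ i ∈ Finset.range N, sgg q i) - (∑ i ∈ Finset.range j, sgg q i)
      ≤ q * ((1 + q * j)⁻¹ - (1 + q * N)⁻¹) := by
  induction N with
  | zero => interval_cases j; simp
  | succ n ih =>
    rcases Nat.lt_or_ge j (n+1) with hlt | hge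
    · have hjn : j ≤ n := Nat.lt_succ_iff.mp hlt
      have := ih hjn
      have h2 := sgg_le q hq0 n
      rw [Finset.sum_range_succ]
      push_cast at *
      linarith
    · have : j = n + 1 := le_antisymm h hge
      subst this; simp

lemma sg_expr (hq0 : 0 < q) (j : ℕ) :
    (∑ k ∈ Finset.Icc 1 j, q / (1 + q * ((k : ℝ) - 1))) - Real.log (1 + q * j)
      = ∑ i ∈ Finset.range j, sgg q i := by
  induction j with
  | zero => simp
  | succ n ih =>
    have hp := sgpos q hq0 n
    have hd := sgd_pos q hq0 n
    have hmul : (1 : ℝ) + q * (n + 1 : ℕ) = (1 + q * n) * (1 + sgd q n) := by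
      unfold sgd; push_cast; field_simp; ring
    rw [Finset.sum_Icc_succ_top (Nat.one_le_iff_ne_zero.mpr (Nat.succ_ne_zero n)),
      Finset.sum_range_succ, hmul, Real.log_mul (by linarith) (by linarith), ← ih]
    have : q / (1 + q * (((n:ℕ)+1 : ℕ) - 1 : ℝ)) = sgd q n := by
      unfold sgd; push_cast; ring_nf
    push_cast at this ⊢
    unfold sgg
    linarith [this]

end aux

/-- For `q ∈ (0,1]` and `q_j = q/(1+q(j−1))`, the limit
`c₀ = lim_j (Σ_{k=1}^j q_k − ln(1+qj))` exists, lies in `[0,q]`, and the speed of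
convergence is bounded by `q_j`. -/
theorem statement12 (q : ℝ) (hq0 : 0 < q) (hq1 : q ≤ 1) :
    ∃ c₀ : ℝ,
      Filter.Tendsto
        (fun j : ℕ =>
          (∑ k ∈ Finset.Icc 1 j, q / (1 + q * ((k : ℝ) - 1))) - Real.log (1 + q * j))
        Filter.atTop (nhds c₀) ∧
      0 ≤ c₀ ∧ c₀ ≤ q ∧
      ∀ j : ℕ, 1 ≤ j →
        |(∑ k ∈ Finset.Icc 1 j, q / (1 + q * ((k : ℝ) - 1))) - Real.log (1 + q * j) - c₀|
          ≤ q / (1 + q * ((j : ℝ) - 1)) := by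
  set P : ℕ → ℝ := fun j => ∑ i ∈ Finset.range j, sgg q i with hP
  have hmono : Monotone P := by
    apply monotone_nat_of_le_succ
    intro n
    simp only [hP, Finset.sum_range_succ]
    linarith [sgg_nonneg q hq0 n]
  have hPle : ∀ N, P N ≤ q := by
    intro N
    have h := sg_tel q hq0 0 N (Nat.zero_le N)
    have hp := sgpos q hq0 N
    have hinv : 0 ≤ (1 + q * N)⁻¹ := by positivity
    simp only [hP] at *
    simp at h
    nlinarith
  have hbdd : BddAbove (Set.range P) := ⟨q, by rintro x ⟨N, rfl⟩; exact hPle N⟩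
  set c₀ := ⨆ j, P j with hc
  have htend : Filter.Tendsto P Filter.atTop (nhds c₀) := tendsto_atTop_ciSup hmono hbdd
  refine ⟨c₀, htend.congr (fun j => (sg_expr q hq0 j).symm), ?_, ?_, ?_⟩
  · have := le_ciSup hbdd 0
    simpa [hP] using this
  · exact ciSup_le hPle
  · intro j hj
    have hPj : P j ≤ c₀ := le_ciSup hbdd j
    have hub : c₀ ≤ P j + q * (1 + q * j)⁻¹ := by
      apply le_of_tendsto htend
      filter_upwards [Filter.eventually_ge_atTop j] with N hN
      have h := sg_tel q hq0 j N hN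
      have hpN := sgpos q hq0 N
      have hinv : 0 < (1 + q * N)⁻¹ := by positivity
      nlinarith
    rw [sg_expr q hq0 j]
    have hj1 : (1:ℝ) ≤ (j:ℝ) := by exact_mod_cast hj
    have hp1 : (0:ℝ) < 1 + q * ((j:ℝ) - 1) := by nlinarith
    have hp2 : (0:ℝ) < 1 + q * j := by positivity
    have hle : q * (1 + q * j)⁻¹ ≤ q / (1 + q * ((j:ℝ) - 1)) := by
      rw [← div_eq_mul_inv]
      gcongr
      nlinarith
    rw [abs_sub_le_iff]
    constructor
    · have : 0 ≤ q / (1 + q * ((j:ℝ)-1)) := by positivity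
      linarith
    · linarith
end

section
/- Let L ≥ 2, C ≥ 0, τ ≥ 0 and q₁ ∈ (0,1], and set q_j := q₁/(1 + q₁(j−1)). There exists a constant C′ > 0, depending only on L, such that every real sequence (m_j)_{j≥1} satisfying |m_j| ≤ C(q_j L^{−j/4} + τ q₁ (1 + q₁(j−1))^{−3/2}) for all j ≥ 1 is absolutely summable, and its sum c satisfies |Σ_{k=1}^j m_k − c| ≤ C′ C (q₁ + τ)/√(1 + q₁(j−1)) for every j ≥ 1. -/
set_option maxHeartbeats 1000000 in
/-- Summability of error sequences along the discrete separatrix: if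
`|m_j| ≤ C(q_j L^{−j/4} + τ q₁ (1+q₁(j−1))^{−3/2})` then `(m_j)_{j≥1}` is absolutely
summable and its partial sums converge to its sum at speed
`C′ C (q₁+τ)/√(1+q₁(j−1))`, with `C′` depending only on `L`. -/
theorem statement13 (L : ℝ) (hL : 2 ≤ L) :
    ∃ C' : ℝ, 0 < C' ∧
      ∀ C τ q₁ : ℝ, 0 ≤ C → 0 ≤ τ → 0 < q₁ → q₁ ≤ 1 →
        ∀ m : ℕ → ℝ,
          (∀ j : ℕ, 1 ≤ j →
            |m j| ≤ C * (q₁ / (1 + q₁ * ((j : ℝ) - 1)) * L ^ (-(j : ℝ) / 4)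
              + τ * q₁ * (1 + q₁ * ((j : ℝ) - 1)) ^ (-(3 : ℝ) / 2))) →
          Summable (fun j : ℕ => |m (j + 1)|) ∧
          ∀ j : ℕ, 1 ≤ j →
            |(∑ k ∈ Finset.Icc 1 j, m k) - ∑' k : ℕ, m (k + 1)|
              ≤ C' * C * (q₁ + τ) / Real.sqrt (1 + q₁ * ((j : ℝ) - 1)) := by
  refine ⟨7, by norm_num, ?_⟩
  intro C τ q₁ hC hτ hq hq1 m hm
  set r : ℝ := (2 : ℝ) ^ (-(1 : ℝ) / 4) with hr_def
  have hr_pos : 0 < r := Real.rpow_pos_of_pos (by norm_num) _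
  have hr_lt1 : r < 1 :=
    Real.rpow_lt_one_of_one_lt_of_neg (by norm_num) (by norm_num)
  have hr4 : r ^ (4 : ℕ) = 1 / 2 := by
    rw [hr_def, ← Real.rpow_natCast ((2 : ℝ) ^ (-(1 : ℝ) / 4)) 4,
      ← Real.rpow_mul (by norm_num : (0 : ℝ) ≤ 2),
      show (-(1 : ℝ) / 4 * ((4 : ℕ) : ℝ)) = -1 by push_cast; ring,
      Real.rpow_neg (by norm_num : (0 : ℝ) ≤ 2), Real.rpow_one]
    norm_num
  have hr67 : r ≤ 6 / 7 := by
    refine le_of_pow_le_pow_left₀ (by norm_num) (by norm_num) (n := 4) ?_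
    rw [hr4]; norm_num
  have hgeom : ∀ n : ℕ, ∑ i ∈ Finset.range n, r ^ i ≤ 7 := by
    intro n
    rw [geom_sum_eq (ne_of_lt hr_lt1) n, div_le_iff_of_neg (by linarith : r - 1 < 0)]
    have h0 : (0 : ℝ) ≤ r ^ n := pow_nonneg hr_pos.le n
    linarith
  -- the separatrix weight
  set h : ℕ → ℝ := fun k => 1 / Real.sqrt (1 + q₁ * k) with hh_def
  have hd1 : ∀ k : ℕ, (1 : ℝ) ≤ 1 + q₁ * k := by
    intro k
    have : (0 : ℝ) ≤ q₁ * k := by positivity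
    linarith
  have hsd1 : ∀ k : ℕ, 1 ≤ Real.sqrt (1 + q₁ * k) := by
    intro k
    have := Real.sqrt_le_sqrt (hd1 k)
    simpa using this
  have hsd_pos : ∀ k : ℕ, 0 < Real.sqrt (1 + q₁ * k) := fun k => lt_of_lt_of_le one_pos (hsd1 k)
  have hhpos : ∀ k : ℕ, 0 < h k := fun k => by positivity
  have hhle1 : ∀ k : ℕ, h k ≤ 1 := by
    intro k
    rw [hh_def]
    simp only [one_div]
    exact inv_le_one_of_one_le₀ (hsd1 k)
  have hmono : ∀ a b : ℕ, a ≤ b → h b ≤ h a := by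
    intro a b hab
    apply one_div_le_one_div_of_le (hsd_pos a)
    apply Real.sqrt_le_sqrt
    have : (a : ℝ) ≤ b := Nat.cast_le.mpr hab
    nlinarith
  -- telescoping bound for the power-law term
  have htel : ∀ k : ℕ, q₁ * (1 + q₁ * (k : ℝ)) ^ (-(3 : ℝ) / 2) ≤ 4 * (h k - h (k + 1)) := by
    intro k
    have hd0 : (0 : ℝ) < 1 + q₁ * k := lt_of_lt_of_le one_pos (hd1 k)
    set sd := Real.sqrt (1 + q₁ * k) with hsd_def
    set sd' := Real.sqrt (1 + q₁ * ((k : ℕ) + 1 : ℕ)) with hsd'_def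
    have hsd2 : sd ^ 2 = 1 + q₁ * k := Real.sq_sqrt hd0.le
    have hsd'2 : sd' ^ 2 = 1 + q₁ * k + q₁ := by
      rw [hsd'_def, Real.sq_sqrt (by positivity)]
      push_cast; ring
    have hsdp : 0 < sd := hsd_pos k
    have hsd'p : 0 < sd' := hsd_pos (k + 1)
    have hsdle : sd ≤ sd' := by
      apply Real.sqrt_le_sqrt
      push_cast
      nlinarith
    have hsd_ge1 : 1 ≤ sd := hsd1 k
    -- rewrite the rpow
    have hpow : (1 + q₁ * (k : ℝ)) ^ (-(3 : ℝ) / 2) = 1 / ((1 + q₁ * k) * sd) := by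
      rw [show (-(3 : ℝ) / 2) = -(3 / 2 : ℝ) by norm_num, Real.rpow_neg hd0.le,
        show (3 / 2 : ℝ) = 1 + 1 / 2 by norm_num, Real.rpow_add hd0,
        Real.rpow_one, ← Real.sqrt_eq_rpow, ← hsd_def, one_div]
    rw [hpow]
    have hhk : h k = 1 / sd := rfl
    have hhk' : h (k + 1) = 1 / sd' := by
      rw [hh_def]
    rw [hhk, hhk']
    rw [div_sub_div _ _ (ne_of_gt hsdp) (ne_of_gt hsd'p), one_mul, mul_one, mul_one_div,
      mul_div_assoc']
    rw [div_le_div_iff₀ (by positivity) (by positivity)]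
    -- q₁ * (sd * sd') ≤ 4 * (sd' - sd) * ((1+q₁k) * sd)
    have he : (sd' - sd) * (sd' + sd) = q₁ := by nlinarith
    have hkey : sd * sd' + sd' ^ 2 ≤ 4 * sd ^ 2 := by nlinarith [sq_nonneg (sd - sd')]
    have step1 : q₁ * (sd * sd') = (sd' - sd) * ((sd * sd' + sd' ^ 2) * sd) := by
      rw [← he]; ring
    calc q₁ * (sd * sd') = (sd' - sd) * ((sd * sd' + sd' ^ 2) * sd) := step1
      _ ≤ (sd' - sd) * ((4 * sd ^ 2) * sd) := by
          apply mul_le_mul_of_nonneg_left _ (sub_nonneg.mpr hsdle)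
          exact mul_le_mul_of_nonneg_right hkey hsdp.le
      _ = 4 * (sd' - sd) * ((1 + q₁ * k) * sd) := by rw [← hsd2]; ring
  -- the master pointwise bound
  have hkey : ∀ k : ℕ, |m (k + 1)| ≤
      C * q₁ * (h k) ^ 2 * r ^ k + 4 * C * τ * (h k - h (k + 1)) := by
    intro k
    have hmk := hm (k + 1) (Nat.succ_le_succ (Nat.zero_le k))
    push_cast at hmk
    rw [add_sub_cancel_right] at hmk
    have hd0 : (0 : ℝ) < 1 + q₁ * k := lt_of_lt_of_le one_pos (hd1 k)
    have hh2 : (h k) ^ 2 = 1 / (1 + q₁ * k) := by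
      rw [hh_def]
      rw [div_pow, one_pow, Real.sq_sqrt hd0.le]
    have hrk : r ^ k = (2 : ℝ) ^ (-(k : ℝ) / 4) := by
      rw [hr_def, ← Real.rpow_natCast ((2 : ℝ) ^ (-(1 : ℝ) / 4)) k,
        ← Real.rpow_mul (by norm_num : (0 : ℝ) ≤ 2)]
      congr 1
      ring
    have hLle : L ^ (-((k : ℝ) + 1) / 4) ≤ r ^ k := by
      calc L ^ (-((k : ℝ) + 1) / 4) ≤ (2 : ℝ) ^ (-((k : ℝ) + 1) / 4) := by
            apply Real.rpow_le_rpow_of_nonpos (by norm_num) hL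
            have : (0 : ℝ) ≤ (k : ℝ) + 1 := by positivity
            linarith
        _ ≤ (2 : ℝ) ^ (-(k : ℝ) / 4) := by
            apply Real.rpow_le_rpow_of_exponent_le (by norm_num)
            have : (0 : ℝ) ≤ (k : ℝ) := Nat.cast_nonneg k
            linarith
        _ = r ^ k := hrk.symm
    have hb1 : q₁ / (1 + q₁ * (k : ℝ)) * L ^ (-((k : ℝ) + 1) / 4) ≤ q₁ * (h k) ^ 2 * r ^ k := by
      rw [hh2, div_eq_mul_one_div q₁]
      apply mul_le_mul_of_nonneg_left hLle
      positivity
    have hb2 : τ * q₁ * (1 + q₁ * (k : ℝ)) ^ (-(3 : ℝ) / 2) ≤ 4 * τ * (h k - h (k + 1)) := by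
      have := htel k
      calc τ * q₁ * (1 + q₁ * (k : ℝ)) ^ (-(3 : ℝ) / 2)
          = τ * (q₁ * (1 + q₁ * (k : ℝ)) ^ (-(3 : ℝ) / 2)) := by ring
        _ ≤ τ * (4 * (h k - h (k + 1))) := mul_le_mul_of_nonneg_left this hτ
        _ = 4 * τ * (h k - h (k + 1)) := by ring
    calc |m (k + 1)| ≤ C * (q₁ / (1 + q₁ * (k : ℝ)) * L ^ (-((k : ℝ) + 1) / 4)
          + τ * q₁ * (1 + q₁ * (k : ℝ)) ^ (-(3 : ℝ) / 2)) := hmk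
      _ ≤ C * (q₁ * (h k) ^ 2 * r ^ k + 4 * τ * (h k - h (k + 1))) := by
          apply mul_le_mul_of_nonneg_left _ hC
          exact add_le_add hb1 hb2
      _ = C * q₁ * (h k) ^ 2 * r ^ k + 4 * C * τ * (h k - h (k + 1)) := by ring
  -- summability
  have htel_sum : Summable (fun k => h k - h (k + 1)) := by
    apply summable_of_sum_range_le (c := h 0)
    · intro n
      exact sub_nonneg.mpr (hmono n (n + 1) (Nat.le_succ n))
    · intro n
      rw [Finset.sum_range_sub' h n]
      have := (hhpos n).le
      linarith
  have hBsum : Summable (fun k : ℕ => C * q₁ * r ^ k + 4 * C * τ * (h k - h (k + 1))) :=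
    ((summable_geometric_of_lt_one hr_pos.le hr_lt1).mul_left (C * q₁)).add
      (htel_sum.mul_left (4 * C * τ))
  have hsum_abs : Summable (fun k : ℕ => |m (k + 1)|) := by
    apply Summable.of_nonneg_of_le (fun k => abs_nonneg _) _ hBsum
    intro k
    refine (hkey k).trans (add_le_add ?_ le_rfl)
    have h2le : (h k) ^ 2 ≤ 1 := by nlinarith [hhpos k, hhle1 k]
    have hrkpos : (0 : ℝ) ≤ r ^ k := pow_nonneg hr_pos.le k
    nlinarith [mul_nonneg (mul_nonneg hC hq.le) hrkpos]
  refine ⟨hsum_abs, ?_⟩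
  intro j hj
  have hsum : Summable (fun k : ℕ => m (k + 1)) := hsum_abs.of_abs
  have hIcc : ∑ k ∈ Finset.Icc 1 j, m k = ∑ k ∈ Finset.range j, m (k + 1) := by
    rw [← Finset.Ico_add_one_right_eq_Icc, Finset.sum_Ico_eq_sum_range]
    refine Finset.sum_congr (by norm_num) fun i _ => by rw [Nat.add_comm]
  have key0 := Summable.sum_add_tsum_nat_add (f := fun k => m (k + 1)) j hsum
  have hdiff : (∑ k ∈ Finset.Icc 1 j, m k) - ∑' k : ℕ, m (k + 1)
      = -(∑' i : ℕ, m (i + j + 1)) := by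
    rw [hIcc, ← key0]
    ring
  rw [hdiff, abs_neg]
  have habs_shift : Summable (fun i : ℕ => |m (i + j + 1)|) :=
    (summable_nat_add_iff j).mpr hsum_abs
  have h1 : |∑' i : ℕ, m (i + j + 1)| ≤ ∑' i : ℕ, |m (i + j + 1)| := by
    simpa [Real.norm_eq_abs] using
      norm_tsum_le_tsum_norm (f := fun i : ℕ => m (i + j + 1)) (by simpa [Real.norm_eq_abs] using habs_shift)
  have h2 : (∑' i : ℕ, |m (i + j + 1)|) ≤ 7 * C * (q₁ + τ) * h j := by
    apply Real.tsum_le_of_sum_range_le (fun n => abs_nonneg _)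
    intro n
    have step : ∀ i ∈ Finset.range n, |m (i + j + 1)| ≤
        C * q₁ * h j * r ^ i + 4 * C * τ * (h (i + j) - h (i + j + 1)) := by
      intro i _
      refine (hkey (i + j)).trans (add_le_add ?_ le_rfl)
      have hle1 : (h (i + j)) ^ 2 ≤ h j := by
        have hm1 : h (i + j) ≤ h j := hmono j (i + j) (Nat.le_add_left j i)
        nlinarith [hhpos (i + j), hhle1 (i + j)]
      have hle2 : r ^ (i + j) ≤ r ^ i := by
        rw [pow_add]
        have : r ^ j ≤ 1 := pow_le_one₀ hr_pos.le hr_lt1.le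
        nlinarith [pow_nonneg hr_pos.le i]
      calc C * q₁ * h (i + j) ^ 2 * r ^ (i + j) ≤ C * q₁ * h j * r ^ (i + j) := by
            apply mul_le_mul_of_nonneg_right _ (pow_nonneg hr_pos.le _)
            have := mul_nonneg hC hq.le
            nlinarith
        _ ≤ C * q₁ * h j * r ^ i := by
            apply mul_le_mul_of_nonneg_left hle2
            positivity
    calc ∑ i ∈ Finset.range n, |m (i + j + 1)|
        ≤ ∑ i ∈ Finset.range n, (C * q₁ * h j * r ^ i + 4 * C * τ * (h (i + j) - h (i + j + 1))) :=
          Finset.sum_le_sum step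
      _ = C * q₁ * h j * (∑ i ∈ Finset.range n, r ^ i)
          + 4 * C * τ * (∑ i ∈ Finset.range n, (h (i + j) - h (i + j + 1))) := by
          rw [Finset.sum_add_distrib, Finset.mul_sum, Finset.mul_sum]
      _ ≤ C * q₁ * h j * 7 + 4 * C * τ * h j := by
          apply add_le_add
          · apply mul_le_mul_of_nonneg_left (hgeom n)
            positivity
          · apply mul_le_mul_of_nonneg_left _ (by positivity)
            have hsr : ∑ i ∈ Finset.range n, (h (i + j) - h (i + j + 1)) = h j - h (n + j) := by
              have : ∀ i : ℕ, h (i + j) - h (i + j + 1) = h (i + j) - h ((i + 1) + j) := by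
                intro i
                congr 2
                omega
              rw [Finset.sum_congr rfl (fun i _ => this i)]
              rw [Finset.sum_range_sub' (fun i => h (i + j)) n]
              simp
            rw [hsr]
            have := (hhpos (n + j)).le
            linarith
      _ ≤ 7 * C * (q₁ + τ) * h j := by
          have h1 := (hhpos j).le
          nlinarith [mul_nonneg hC hτ, mul_nonneg (mul_nonneg hC hτ) h1]
  have h3 : 7 * C * (q₁ + τ) * h j ≤ 7 * C * (q₁ + τ) / Real.sqrt (1 + q₁ * ((j : ℝ) - 1)) := by
    have hjm : (0 : ℝ) ≤ (j : ℝ) - 1 := by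
      have : (1 : ℝ) ≤ (j : ℝ) := by exact_mod_cast hj
      linarith
    have hd0 : (0 : ℝ) < 1 + q₁ * ((j : ℝ) - 1) := by nlinarith
    have hsle : Real.sqrt (1 + q₁ * ((j : ℝ) - 1)) ≤ Real.sqrt (1 + q₁ * j) := by
      apply Real.sqrt_le_sqrt
      nlinarith
    have hs0 : 0 < Real.sqrt (1 + q₁ * ((j : ℝ) - 1)) := Real.sqrt_pos.mpr hd0
    have hnum : (0 : ℝ) ≤ 7 * C * (q₁ + τ) := by positivity
    have : h j = 1 / Real.sqrt (1 + q₁ * j) := rfl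
    rw [this, mul_one_div]
    exact div_le_div_of_nonneg_left hnum hs0 hsle
  exact le_trans h1 (le_trans h2 h3)
end

section
/- Let L > 1, c ≥ 0, C ≥ 0, τ ≥ 0 and κ ∈ ℝ. There exist ε > 0 and C′ > 0, depending only on L, c, C, τ, κ, such that the following holds for every q₁ ∈ (0,ε]. Set q_j := q₁/(1 + q₁(j−1)). Let (γ_j)_{j≥1} and (M_j)_{j≥1} be real sequences with |γ_j − (ln L)/(2π)| ≤ c L^{−j/4} and |M_j| ≤ C(q_j L^{−j/4} + τ q₁ (1 + q₁(j−1))^{−3/2}) for all j ≥ 1, let Z₁ ∈ ℝ, and define recursively Z_{j+1} := L² e^{−πγ_j}(1 + κ q_j + M_j) Z_j. Then there exists a constant c_κ (independent of j) with |c_κ| ≤ C′(q₁ + τ), and for every j ≥ 1 reals r_j with |r_j| ≤ C′(q₁ + τ)/√(1 + q₁(j−1)), such that Z_{j+1} = Z₁ · L^{3j/2} · (1 + q₁ j)^{κ} · e^{g_j + c_κ + r_j}, where g_j := −π Σ_{k=1}^j (γ_k − (ln L)/(2π)). -/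
open Finset Real

lemma geom_bd {ρ : ℝ} (h0 : 0 ≤ ρ) (h1 : ρ < 1) (n : ℕ) :
    ∑ i ∈ range n, ρ^i ≤ (1-ρ)⁻¹ := by
  refine (Summable.sum_le_tsum (range n) (fun i _ => by positivity) ?_).trans_eq
    (tsum_geometric_of_lt_one h0 h1)
  exact summable_geometric_of_lt_one h0 h1

lemma log_one_add_bd {x : ℝ} (h : |x| ≤ 1/2) : |Real.log (1+x) - x| ≤ 2*x^2 := by
  have h1 : |(-x)| < 1 := by rw [abs_neg]; linarith [abs_nonneg x]
  have key : |(-x) + Real.log (1 - (-x))| ≤ |(-x)|^(1+1)/(1-|(-x)|) := by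
    have := Real.abs_log_sub_add_sum_range_le h1 1
    simpa [Finset.sum_range_succ] using this
  rw [abs_neg] at key
  have h2 : (1:ℝ) - |x| ≥ 1/2 := by linarith
  have h3 : |x|^(1+1) / (1 - |x|) ≤ 2*x^2 := by
    rw [div_le_iff₀ (by linarith)]
    norm_num
    nlinarith [sq_abs x, sq_nonneg x, abs_nonneg x,
      mul_nonneg (sq_nonneg x) (by linarith : (0:ℝ) ≤ 1-2*|x|)]
  have e : |Real.log (1+x) - x| = |(-x) + Real.log (1 - (-x))| := by
    rw [sub_neg_eq_add]; congr 1; ring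
  rw [e, abs_neg] at *
  exact key.trans h3

lemma tele1 {x q₁ : ℝ} (hx : 1 ≤ x) (h0 : 0 < q₁) (h1 : q₁ ≤ 1) :
    q₁ * x ^ (-(3:ℝ)/2) ≤ 6 * (x ^ (-(1:ℝ)/2) - (x+q₁) ^ (-(1:ℝ)/2)) := by
  have hx0 : (0:ℝ) < x := by linarith
  have hb0 : (0:ℝ) < x + q₁ := by linarith
  set u := Real.sqrt x with hu
  set v := Real.sqrt (x+q₁) with hv
  have hu0 : 0 < u := Real.sqrt_pos.mpr hx0
  have hv0 : 0 < v := Real.sqrt_pos.mpr hb0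
  have hu2 : u^2 = x := Real.sq_sqrt hx0.le
  have hv2 : v^2 = x + q₁ := Real.sq_sqrt hb0.le
  have huv : u ≤ v := Real.sqrt_le_sqrt (by linarith)
  have e1 : x ^ (-(3:ℝ)/2) = (x*u)⁻¹ := by
    rw [show (-(3:ℝ)/2) = -((3:ℝ)/2) by ring, Real.rpow_neg hx0.le]
    congr 1
    rw [show ((3:ℝ)/2) = 1 + 1/2 by norm_num, Real.rpow_add hx0, Real.rpow_one,
      ← Real.sqrt_eq_rpow]
  have e2 : x ^ (-(1:ℝ)/2) = u⁻¹ := by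
    rw [show (-(1:ℝ)/2) = -(1/2 : ℝ) by ring, Real.rpow_neg hx0.le, ← Real.sqrt_eq_rpow]
  have e3 : (x+q₁) ^ (-(1:ℝ)/2) = v⁻¹ := by
    rw [show (-(1:ℝ)/2) = -(1/2 : ℝ) by ring, Real.rpow_neg hb0.le, ← Real.sqrt_eq_rpow]
  rw [e1, e2, e3]
  have e4 : u⁻¹ - v⁻¹ = q₁ / (u*v*(u+v)) := by
    rw [eq_div_iff (by positivity)]
    have hune : u ≠ 0 := hu0.ne'
    have hvne : v ≠ 0 := hv0.ne'
    field_simp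
    linear_combination hv2 - hu2
  rw [e4, ← div_eq_mul_inv, mul_div_assoc']
  rw [div_le_div_iff₀ (by positivity) (by positivity)]
  have k1 : v*(u+v) ≤ 4*x := by nlinarith
  have k2 := mul_le_mul_of_nonneg_left (mul_le_mul_of_nonneg_left k1 hu0.le) h0.le
  nlinarith [k2, mul_pos (mul_pos h0 hx0) hu0]


lemma tailBound (A₁ A₂ : ℝ) (hA₁ : 0 ≤ A₁) (hA₂ : 0 ≤ A₂) {ρ q₁ : ℝ}
    (hρ0 : 0 < ρ) (hρ1 : ρ < 1)
    (K : ℝ) (hK : ∀ n : ℕ, Real.sqrt (1 + q₁ * n) * ρ ^ n ≤ K)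
    (hq0 : 0 < q₁) (hq1 : q₁ ≤ 1) (e : ℕ → ℝ)
    (he : ∀ k : ℕ, 1 ≤ k →
      |e k| ≤ A₁*q₁*ρ^k + A₂*(q₁ * (1 + q₁*((k:ℝ)-1)) ^ (-(3:ℝ)/2)))
    (j m : ℕ) (hjm : j ≤ m) :
    |∑ k ∈ Finset.Icc 1 m, e k - ∑ k ∈ Finset.Icc 1 j, e k|
      ≤ (A₁*q₁*K*(1-ρ)⁻¹ + 6*A₂) / Real.sqrt (1 + q₁*j) := by
  have hs0 : (0:ℝ) < 1 + q₁ * j := by positivity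
  have hsq : (0:ℝ) < Real.sqrt (1 + q₁ * j) := Real.sqrt_pos.mpr hs0
  have hIcc : ∀ n : ℕ, Finset.Icc 1 n = Finset.Ioc 0 n := fun n => Finset.Icc_add_one_left_eq_Ioc 0 n
  have hsplit : ∑ k ∈ Finset.Icc 1 m, e k - ∑ k ∈ Finset.Icc 1 j, e k
      = ∑ k ∈ Finset.Ioc j m, e k := by
    rw [hIcc, hIcc, ← Finset.sum_Ioc_consecutive e (Nat.zero_le j) hjm]; ring
  rw [hsplit]
  have h1 : |∑ k ∈ Finset.Ioc j m, e k| ≤ ∑ k ∈ Finset.Ioc j m, |e k| :=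
    Finset.abs_sum_le_sum_abs _ _
  have h2 : ∑ k ∈ Finset.Ioc j m, |e k|
      ≤ ∑ k ∈ Finset.Ioc j m, (A₁*q₁*ρ^k + A₂*(q₁ * (1 + q₁*((k:ℝ)-1)) ^ (-(3:ℝ)/2))) := by
    refine Finset.sum_le_sum fun k hk => he k ?_
    have := (Finset.mem_Ioc.mp hk).1; omega
  rw [Finset.sum_add_distrib, ← Finset.mul_sum, ← Finset.mul_sum] at h2
  -- geometric part
  have hIoc : Finset.Ioc j m = Finset.Ico (j+1) (m+1) := by
    ext k; simp [Finset.mem_Ioc, Finset.mem_Ico]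
  have hg : ∑ k ∈ Finset.Ioc j m, ρ^k ≤ ρ^j * (1-ρ)⁻¹ := by
    rw [hIoc, Finset.sum_Ico_eq_sum_range]
    have : ∀ i : ℕ, ρ^(j+1+i) = ρ^(j+1) * ρ^i := fun i => pow_add ρ (j+1) i
    rw [Finset.sum_congr rfl fun i _ => this i, ← Finset.mul_sum]
    have hinv : (0:ℝ) ≤ (1-ρ)⁻¹ := inv_nonneg.mpr (by linarith)
    calc ρ^(j+1) * ∑ i ∈ range (m+1-(j+1)), ρ^i
        ≤ ρ^(j+1) * (1-ρ)⁻¹ :=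
          mul_le_mul_of_nonneg_left (geom_bd hρ0.le hρ1 _) (pow_nonneg hρ0.le _)
      _ ≤ ρ^j * (1-ρ)⁻¹ := by
          have h5 : ρ^(j+1) ≤ ρ^j := by
            rw [pow_succ]
            nlinarith [pow_pos hρ0 j]
          exact mul_le_mul_of_nonneg_right h5 hinv
  -- telescoping part
  have ht : ∑ k ∈ Finset.Ioc j m, q₁ * (1 + q₁*((k:ℝ)-1)) ^ (-(3:ℝ)/2)
      ≤ 6 * (1 + q₁*j) ^ (-(1:ℝ)/2) := by
    set g : ℕ → ℝ := fun i => (1 + q₁*((j+i : ℕ):ℝ)) ^ (-(1:ℝ)/2) with hgdef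
    have hterm : ∀ i : ℕ, q₁ * (1 + q₁*(((j+1+i : ℕ):ℝ)-1)) ^ (-(3:ℝ)/2)
        ≤ 6 * (g i - g (i+1)) := by
      intro i
      have hx : (1:ℝ) ≤ 1 + q₁*((j+i : ℕ):ℝ) := by
        have : (0:ℝ) ≤ q₁*((j+i : ℕ):ℝ) := by positivity
        linarith
      have := tele1 hx hq0 hq1
      have e1 : (1 + q₁*(((j+1+i : ℕ):ℝ)-1)) = 1 + q₁*((j+i : ℕ):ℝ) := by
        push_cast; ring
      have e2 : (1 + q₁*((j+i : ℕ):ℝ)) + q₁ = 1 + q₁*((j+(i+1) : ℕ):ℝ) := by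
        push_cast; ring
      rw [e1]
      simp only [hgdef]
      rw [← e2]
      exact this
    rw [hIoc, Finset.sum_Ico_eq_sum_range]
    calc ∑ i ∈ range (m+1-(j+1)), q₁ * (1 + q₁*(((j+1+i : ℕ):ℝ)-1)) ^ (-(3:ℝ)/2)
        ≤ ∑ i ∈ range (m+1-(j+1)), 6 * (g i - g (i+1)) :=
          Finset.sum_le_sum fun i _ => hterm i
      _ = 6 * (g 0 - g (m+1-(j+1))) := by rw [← Finset.mul_sum, Finset.sum_range_sub' g]
      _ ≤ 6 * g 0 := by
          have : 0 ≤ g (m+1-(j+1)) := Real.rpow_nonneg (by positivity) _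
          linarith
      _ = 6 * (1 + q₁*j) ^ (-(1:ℝ)/2) := by simp [hgdef]
  -- combine
  have hρj : ρ^j ≤ K / Real.sqrt (1 + q₁*j) := by
    rw [le_div_iff₀ hsq]
    have := hK j
    nlinarith [pow_pos hρ0 j]
  have hrp : (1 + q₁*(j:ℝ)) ^ (-(1:ℝ)/2) = (Real.sqrt (1 + q₁*j))⁻¹ := by
    rw [show (-(1:ℝ)/2) = -(1/2 : ℝ) by ring, Real.rpow_neg hs0.le, ← Real.sqrt_eq_rpow]
  calc |∑ k ∈ Finset.Ioc j m, e k|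
      ≤ A₁*q₁ * ∑ k ∈ Finset.Ioc j m, ρ^k
        + A₂ * ∑ k ∈ Finset.Ioc j m, q₁ * (1 + q₁*((k:ℝ)-1)) ^ (-(3:ℝ)/2) :=
        h1.trans h2
    _ ≤ A₁*q₁ * (ρ^j * (1-ρ)⁻¹) + A₂ * (6 * (1 + q₁*j) ^ (-(1:ℝ)/2)) := by
        gcongr
    _ ≤ A₁*q₁ * ((K / Real.sqrt (1 + q₁*j)) * (1-ρ)⁻¹)
        + A₂ * (6 * (Real.sqrt (1 + q₁*j))⁻¹) := by
        rw [hrp]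
        have hinv : (0:ℝ) ≤ (1-ρ)⁻¹ := inv_nonneg.mpr (by linarith)
        exact add_le_add (mul_le_mul_of_nonneg_left
          (mul_le_mul_of_nonneg_right hρj hinv) (mul_nonneg hA₁ hq0.le)) le_rfl
    _ = (A₁*q₁*K*(1-ρ)⁻¹ + 6*A₂) / Real.sqrt (1 + q₁*j) := by
        rw [div_eq_mul_inv, div_eq_mul_inv]; ring

lemma Kbound {L q₁ : ℝ} (hL : 1 < L) (hq0 : 0 ≤ q₁) (hq1 : q₁ ≤ 1) (n : ℕ) :
    Real.sqrt (1 + q₁ * n) * (L ^ (-(1:ℝ)/4)) ^ n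
      ≤ (Real.sqrt (min 1 (Real.sqrt L - 1)))⁻¹ := by
  have hL0 : (0:ℝ) < L := by linarith
  have hsL : 1 < Real.sqrt L := by
    rw [show (1:ℝ) = Real.sqrt 1 by simp]
    exact Real.sqrt_lt_sqrt (by norm_num) hL
  set μ : ℝ := min 1 (Real.sqrt L - 1) with hμdef
  have hμ0 : 0 < μ := lt_min one_pos (by linarith)
  have hμ1 : μ ≤ 1 := min_le_left _ _
  have hμ2 : μ ≤ Real.sqrt L - 1 := min_le_right _ _
  -- Bernoulli
  have hbern : 1 + (n:ℝ) * (Real.sqrt L - 1) ≤ (Real.sqrt L)^n := by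
    have := one_add_mul_le_pow (by linarith : (-2:ℝ) ≤ Real.sqrt L - 1) n
    simpa using this
  have hb : 1 + q₁*(n:ℝ) ≤ μ⁻¹ * (Real.sqrt L)^n := by
    have h2 : μ * (1 + q₁*(n:ℝ)) ≤ (Real.sqrt L)^n := by
      have hn0 : (0:ℝ) ≤ (n:ℝ) := Nat.cast_nonneg n
      nlinarith [mul_nonneg (mul_nonneg hμ0.le (sub_nonneg.mpr hq1)) hn0,
        mul_nonneg (sub_nonneg.mpr (le_trans hμ2 le_rfl)) hn0,
        mul_nonneg (sub_nonneg.mpr hμ2) hn0]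
    calc 1 + q₁*(n:ℝ) = μ⁻¹ * (μ * (1 + q₁*(n:ℝ))) := by
          rw [← mul_assoc, inv_mul_cancel₀ hμ0.ne', one_mul]
      _ ≤ μ⁻¹ * (Real.sqrt L)^n := by
          exact mul_le_mul_of_nonneg_left h2 (inv_nonneg.mpr hμ0.le)
  have key : Real.sqrt ((Real.sqrt L)^n) * (L ^ (-(1:ℝ)/4)) ^ n = 1 := by
    have h1 : (Real.sqrt L)^n = L ^ ((n:ℝ)/2) := by
      rw [Real.sqrt_eq_rpow, ← Real.rpow_natCast (L ^ ((1:ℝ)/2)) n,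
        ← Real.rpow_mul hL0.le]
      congr 1; ring
    have h2 : Real.sqrt (L ^ ((n:ℝ)/2)) = L ^ ((n:ℝ)/4) := by
      rw [Real.sqrt_eq_rpow, ← Real.rpow_mul hL0.le]
      congr 1; ring
    have h3 : (L ^ (-(1:ℝ)/4))^n = L ^ (-(n:ℝ)/4) := by
      rw [← Real.rpow_natCast (L ^ (-(1:ℝ)/4)) n, ← Real.rpow_mul hL0.le]
      congr 1; ring
    rw [h1, h2, h3, ← Real.rpow_add hL0,
      show (n:ℝ)/4 + -(n:ℝ)/4 = 0 by ring, Real.rpow_zero]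
  have hρn : (0:ℝ) ≤ (L ^ (-(1:ℝ)/4)) ^ n := pow_nonneg (Real.rpow_pos_of_pos hL0 _).le n
  calc Real.sqrt (1 + q₁ * n) * (L ^ (-(1:ℝ)/4)) ^ n
      ≤ Real.sqrt (μ⁻¹ * (Real.sqrt L)^n) * (L ^ (-(1:ℝ)/4)) ^ n := by
        exact mul_le_mul_of_nonneg_right (Real.sqrt_le_sqrt hb) hρn
    _ = (Real.sqrt μ)⁻¹ * (Real.sqrt ((Real.sqrt L)^n) * (L ^ (-(1:ℝ)/4)) ^ n) := by
        rw [Real.sqrt_mul (inv_nonneg.mpr hμ0.le), Real.sqrt_inv]; ring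
    _ = (Real.sqrt μ)⁻¹ := by rw [key, mul_one]

set_option maxHeartbeats 1000000 in
/-- Asymptotic solution of the flow of a fractional-charge
renormalization constant at `α² = 8π`: if
`Z_{j+1} = L² e^{−πγ_j} (1 + κ q_j + M_j) Z_j` with `γ_j = (ln L)/(2π) + O(L^{−j/4})`
and `M_j` a separatrix-size error, then
`Z_{j+1} = Z₁ L^{3j/2} (1+q₁ j)^κ e^{g_j + c_κ + r_j}` with `|c_κ| ≤ C′(q₁+τ)` and
`|r_j| ≤ C′(q₁+τ)/√(1+q₁(j−1))`. -/
theorem statement14 (L c C τ κ : ℝ) (hL : 1 < L) (hc : 0 ≤ c) (hC : 0 ≤ C) (hτ : 0 ≤ τ) :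
    ∃ ε : ℝ, 0 < ε ∧ ∃ C' : ℝ, 0 < C' ∧
      ∀ q₁ : ℝ, 0 < q₁ → q₁ ≤ ε →
        ∀ γ M : ℕ → ℝ,
          (∀ j : ℕ, 1 ≤ j →
            |γ j - Real.log L / (2 * Real.pi)| ≤ c * L ^ (-(j : ℝ) / 4)) →
          (∀ j : ℕ, 1 ≤ j →
            |M j| ≤ C * (q₁ / (1 + q₁ * ((j : ℝ) - 1)) * L ^ (-(j : ℝ) / 4)
              + τ * q₁ * (1 + q₁ * ((j : ℝ) - 1)) ^ (-(3 : ℝ) / 2))) →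
          ∀ Z : ℕ → ℝ,
            (∀ j : ℕ, 1 ≤ j →
              Z (j + 1) = L ^ 2 * Real.exp (-Real.pi * γ j) *
                (1 + κ * (q₁ / (1 + q₁ * ((j : ℝ) - 1))) + M j) * Z j) →
            ∃ cκ : ℝ, |cκ| ≤ C' * (q₁ + τ) ∧
              ∃ r : ℕ → ℝ,
                (∀ j : ℕ, 1 ≤ j →
                  |r j| ≤ C' * (q₁ + τ) / Real.sqrt (1 + q₁ * ((j : ℝ) - 1))) ∧
                ∀ j : ℕ, 1 ≤ j →
                  Z (j + 1) = Z 1 * L ^ (3 * (j : ℝ) / 2) * (1 + q₁ * j) ^ κ *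
                    Real.exp
                      ((-Real.pi *
                          ∑ k ∈ Finset.Icc 1 j, (γ k - Real.log L / (2 * Real.pi)))
                        + cκ + r j) := by
  have hL0 : (0:ℝ) < L := by linarith
  have hρ0 : (0:ℝ) < L ^ (-(1:ℝ)/4) := Real.rpow_pos_of_pos hL0 _
  have hρ1 : L ^ (-(1:ℝ)/4) < 1 := Real.rpow_lt_one_of_one_lt_of_neg hL (by norm_num)
  obtain ⟨ρ, hρdef⟩ : ∃ x : ℝ, x = L ^ (-(1:ℝ)/4) := ⟨_, rfl⟩
  obtain ⟨K, hKdef⟩ : ∃ x : ℝ, x = (Real.sqrt (min 1 (Real.sqrt L - 1)))⁻¹ := ⟨_, rfl⟩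
  rw [← hρdef] at hρ0 hρ1
  have hsL : 1 < Real.sqrt L := by
    rw [show (1:ℝ) = Real.sqrt 1 by simp]
    exact Real.sqrt_lt_sqrt (by norm_num) hL
  have hK0 : 0 < K := by
    rw [hKdef]
    exact inv_pos.mpr (Real.sqrt_pos.mpr (lt_min one_pos (by linarith)))
  have hinvρ : (0:ℝ) ≤ (1-ρ)⁻¹ := inv_nonneg.mpr (by linarith)
  obtain ⟨A₂, hA₂def⟩ : ∃ x : ℝ, x = 3*C + 4*κ^2 + 2*|κ| := ⟨_, rfl⟩
  have hA₂0 : 0 ≤ A₂ := by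
    rw [hA₂def]
    exact add_nonneg (add_nonneg (by linarith) (by positivity)) (by positivity)
  obtain ⟨C₀, hC₀def⟩ : ∃ x : ℝ, x = 3*C*K*(1-ρ)⁻¹ + 6*A₂ := ⟨_, rfl⟩
  have hC₀0 : 0 ≤ C₀ := by
    rw [hC₀def]
    exact add_nonneg (mul_nonneg (mul_nonneg (by linarith) hK0.le) hinvρ) (by linarith)
  obtain ⟨B, hBdef⟩ : ∃ x : ℝ, x = |κ| + C*(1+τ) := ⟨_, rfl⟩
  have hB0 : 0 ≤ B := by
    rw [hBdef]
    exact add_nonneg (abs_nonneg κ) (mul_nonneg hC (by linarith))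
  refine ⟨min (1/2) (1/(2*B+2)), lt_min (by norm_num) (by positivity), C₀+1,
    by linarith, ?_⟩
  intro q₁ hq0 hqε γ M hγ hM Z hZ
  have hq12 : q₁ ≤ 1/2 := le_trans hqε (min_le_left _ _)
  have hq1 : q₁ ≤ 1 := by linarith
  have hqτ0 : (0:ℝ) ≤ q₁ + τ := by linarith
  have hqB : q₁ * B ≤ 1/2 := by
    have h := le_trans hqε (min_le_right _ _)
    have h2 : q₁ * (2*B+2) ≤ 1 := by
      rw [← le_div_iff₀ (by linarith : (0:ℝ) < 2*B+2)]; exact h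
    nlinarith [mul_nonneg hq0.le hB0]
  -- basic pointwise facts
  have hP1 : ∀ k : ℕ, 1 ≤ k → (1:ℝ) ≤ 1 + q₁ * ((k:ℝ)-1) := by
    intro k hk
    have h1 : (1:ℝ) ≤ (k:ℝ) := by exact_mod_cast hk
    nlinarith
  have hP0 : ∀ k : ℕ, 1 ≤ k → (0:ℝ) < 1 + q₁ * ((k:ℝ)-1) :=
    fun k hk => lt_of_lt_of_le one_pos (hP1 k hk)
  have hqk_pos : ∀ k : ℕ, 1 ≤ k → 0 < q₁ / (1 + q₁*((k:ℝ)-1)) :=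
    fun k hk => div_pos hq0 (hP0 k hk)
  have hqk_le : ∀ k : ℕ, 1 ≤ k → q₁ / (1 + q₁*((k:ℝ)-1)) ≤ q₁ := by
    intro k hk
    rw [div_le_iff₀ (hP0 k hk)]
    nlinarith [hP1 k hk]
  have hρk : ∀ k : ℕ, L ^ (-(k:ℝ)/4) = ρ ^ k := by
    intro k
    rw [hρdef, ← Real.rpow_natCast (L ^ (-(1:ℝ)/4)) k, ← Real.rpow_mul hL0.le]
    congr 1; ring
  have hρk1 : ∀ k : ℕ, ρ^k ≤ 1 := fun k => pow_le_one₀ hρ0.le hρ1.le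
  have hPk1 : ∀ k : ℕ, 1 ≤ k → (1 + q₁*((k:ℝ)-1)) ^ (-(3:ℝ)/2) ≤ 1 := fun k hk =>
    Real.rpow_le_one_of_one_le_of_nonpos (hP1 k hk) (by norm_num)
  have hPk0 : ∀ k : ℕ, 1 ≤ k → (0:ℝ) ≤ (1 + q₁*((k:ℝ)-1)) ^ (-(3:ℝ)/2) := fun k hk =>
    (Real.rpow_pos_of_pos (hP0 k hk) _).le
  have hM' : ∀ k : ℕ, 1 ≤ k →
      |M k| ≤ C*q₁*ρ^k + C*τ*(q₁ * (1 + q₁*((k:ℝ)-1)) ^ (-(3:ℝ)/2)) := by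
    intro k hk
    have h1 : q₁/(1+q₁*((k:ℝ)-1)) * L ^ (-(k:ℝ)/4) ≤ q₁ * ρ^k := by
      rw [hρk k]
      exact mul_le_mul_of_nonneg_right (hqk_le k hk) (pow_nonneg hρ0.le k)
    calc |M k| ≤ C * (q₁/(1+q₁*((k:ℝ)-1)) * L ^ (-(k:ℝ)/4)
          + τ*q₁*(1+q₁*((k:ℝ)-1))^(-(3:ℝ)/2)) := hM k hk
      _ ≤ C * (q₁*ρ^k + τ*q₁*(1+q₁*((k:ℝ)-1))^(-(3:ℝ)/2)) :=
          mul_le_mul_of_nonneg_left (by linarith) hC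
      _ = C*q₁*ρ^k + C*τ*(q₁ * (1+q₁*((k:ℝ)-1))^(-(3:ℝ)/2)) := by ring
  have hMk1 : ∀ k : ℕ, 1 ≤ k → |M k| ≤ C*(1+τ)*q₁ := by
    intro k hk
    have h1 := hM' k hk
    have h2 : C*q₁*ρ^k ≤ C*q₁ :=
      mul_le_of_le_one_right (mul_nonneg hC hq0.le) (hρk1 k)
    have h3 : q₁ * (1+q₁*((k:ℝ)-1))^(-(3:ℝ)/2) ≤ q₁ :=
      mul_le_of_le_one_right hq0.le (hPk1 k hk)
    have h4 : C*τ*(q₁ * (1+q₁*((k:ℝ)-1))^(-(3:ℝ)/2)) ≤ C*τ*q₁ :=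
      mul_le_mul_of_nonneg_left h3 (mul_nonneg hC hτ)
    have h5 : C*(1+τ)*q₁ = C*q₁ + C*τ*q₁ := by ring
    linarith
  have hMk12 : ∀ k : ℕ, 1 ≤ k → |M k| ≤ 1/2 := by
    intro k hk
    have := hMk1 k hk
    have h2 : C*(1+τ)*q₁ ≤ q₁*B := by
      rw [hBdef]
      nlinarith [mul_nonneg hq0.le (abs_nonneg κ)]
    linarith
  have hx2 : ∀ k : ℕ, 1 ≤ k → |κ * (q₁/(1+q₁*((k:ℝ)-1))) + M k| ≤ 1/2 := by
    intro k hk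
    have h1 : |κ * (q₁/(1+q₁*((k:ℝ)-1)))| ≤ |κ| * q₁ := by
      rw [abs_mul]
      exact mul_le_mul_of_nonneg_left
        (by rw [abs_of_pos (hqk_pos k hk)]; exact hqk_le k hk) (abs_nonneg κ)
    calc |κ * (q₁/(1+q₁*((k:ℝ)-1))) + M k|
        ≤ |κ * (q₁/(1+q₁*((k:ℝ)-1)))| + |M k| := abs_add_le _ _
      _ ≤ |κ| * q₁ + C*(1+τ)*q₁ := add_le_add h1 (hMk1 k hk)
      _ = q₁ * B := by rw [hBdef]; ring
      _ ≤ 1/2 := hqB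
  have hapos : ∀ k : ℕ, 1 ≤ k →
      (0:ℝ) < 1 + κ * (q₁/(1+q₁*((k:ℝ)-1))) + M k := by
    intro k hk
    have := abs_le.mp (hx2 k hk)
    cases this with
    | intro h1 h2 => linarith [h1]
  -- definitions of e and S
  set e : ℕ → ℝ := fun k => Real.log (1 + κ * (q₁/(1+q₁*((k:ℝ)-1))) + M k)
      - κ * (Real.log (1 + q₁*(k:ℝ)) - Real.log (1 + q₁*((k:ℝ)-1))) with hedef
  set S : ℕ → ℝ := fun n => ∑ k ∈ Finset.Icc 1 n, e k with hSdef
  -- the e-bound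
  have he : ∀ k : ℕ, 1 ≤ k →
      |e k| ≤ 3*C*q₁*ρ^k + (A₂*(q₁+τ))*(q₁*(1+q₁*((k:ℝ)-1))^(-(3:ℝ)/2)) := by
    intro k hk
    have hP := hP0 k hk
    have hP1' := hP1 k hk
    have hqkpos := hqk_pos k hk
    have hqkle := hqk_le k hk
    have hx := hx2 k hk
    have hM12 := hMk12 k hk
    have hMbd := hM' k hk
    have htele : Real.log (1 + q₁*(k:ℝ)) - Real.log (1 + q₁*((k:ℝ)-1))
        = Real.log (1 + q₁/(1+q₁*((k:ℝ)-1))) := by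
      have h1 : (1:ℝ) + q₁/(1+q₁*((k:ℝ)-1)) = (1+q₁*(k:ℝ))/(1+q₁*((k:ℝ)-1)) := by
        field_simp
        ring
      have h2 : (0:ℝ) < 1 + q₁*(k:ℝ) := by positivity
      rw [h1, Real.log_div h2.ne' hP.ne']
    have hassoc : (1:ℝ) + κ*(q₁/(1+q₁*((k:ℝ)-1))) + M k
        = 1 + (κ*(q₁/(1+q₁*((k:ℝ)-1))) + M k) := by ring
    have hlog1 : |Real.log (1 + κ*(q₁/(1+q₁*((k:ℝ)-1))) + M k)
        - (κ*(q₁/(1+q₁*((k:ℝ)-1))) + M k)| ≤ 2*(κ*(q₁/(1+q₁*((k:ℝ)-1))) + M k)^2 := by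
      rw [hassoc]; exact log_one_add_bd hx
    have hqk12 : |q₁/(1+q₁*((k:ℝ)-1))| ≤ 1/2 := by
      rw [abs_of_pos hqkpos]; linarith
    have hlog2 := log_one_add_bd hqk12
    have e_eq : e k = (Real.log (1 + κ*(q₁/(1+q₁*((k:ℝ)-1))) + M k)
          - (κ*(q₁/(1+q₁*((k:ℝ)-1))) + M k))
        + (M k + κ*((q₁/(1+q₁*((k:ℝ)-1)))
            - Real.log (1 + q₁/(1+q₁*((k:ℝ)-1))))) := by
      simp only [hedef]
      rw [htele]; ring
    have habs : |e k| ≤ |Real.log (1 + κ*(q₁/(1+q₁*((k:ℝ)-1))) + M k)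
          - (κ*(q₁/(1+q₁*((k:ℝ)-1))) + M k)|
        + (|M k| + |κ| * |Real.log (1 + q₁/(1+q₁*((k:ℝ)-1)))
            - (q₁/(1+q₁*((k:ℝ)-1)))|) := by
      rw [e_eq]
      refine (abs_add_le _ _).trans (add_le_add le_rfl ?_)
      refine (abs_add_le _ _).trans (add_le_add le_rfl ?_)
      rw [abs_mul, abs_sub_comm]
    have hsq : (κ*(q₁/(1+q₁*((k:ℝ)-1))) + M k)^2
        ≤ 2*κ^2*(q₁/(1+q₁*((k:ℝ)-1)))^2 + 2*(M k)^2 := by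
      nlinarith [sq_nonneg (κ*(q₁/(1+q₁*((k:ℝ)-1))) - M k)]
    have hM2 : (M k)^2 ≤ (1/2)*|M k| := by
      nlinarith [abs_nonneg (M k), sq_abs (M k)]
    -- qk² bound
    have hY0 : (0:ℝ) ≤ q₁*(1+q₁*((k:ℝ)-1))^(-(3:ℝ)/2) := mul_nonneg hq0.le (hPk0 k hk)
    have hqksq : (q₁/(1+q₁*((k:ℝ)-1)))^2
        ≤ q₁*(q₁*(1+q₁*((k:ℝ)-1))^(-(3:ℝ)/2)) := by
      have h1 : (q₁/(1+q₁*((k:ℝ)-1)))^2 = q₁^2 * (((1+q₁*((k:ℝ)-1))^2)⁻¹) := by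
        rw [div_pow, div_eq_mul_inv]
      have h3 : (1+q₁*((k:ℝ)-1))^((3:ℝ)/2) ≤ (1+q₁*((k:ℝ)-1))^((2:ℕ):ℝ) :=
        Real.rpow_le_rpow_of_exponent_le hP1' (by norm_num)
      have h4 : ((1+q₁*((k:ℝ)-1))^2)⁻¹ ≤ (1+q₁*((k:ℝ)-1))^(-(3:ℝ)/2) := by
        rw [show (-(3:ℝ)/2) = -((3:ℝ)/2) by ring, Real.rpow_neg hP.le]
        rw [← Real.rpow_natCast (1+q₁*((k:ℝ)-1)) 2]
        exact inv_anti₀ (Real.rpow_pos_of_pos hP _) h3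
      calc (q₁/(1+q₁*((k:ℝ)-1)))^2 = q₁^2 * (((1+q₁*((k:ℝ)-1))^2)⁻¹) := h1
        _ ≤ q₁^2 * ((1+q₁*((k:ℝ)-1))^(-(3:ℝ)/2)) :=
            mul_le_mul_of_nonneg_left h4 (sq_nonneg q₁)
        _ = q₁*(q₁*(1+q₁*((k:ℝ)-1))^(-(3:ℝ)/2)) := by ring
    -- coefficient inequality
    have hcoef : 3*C*τ + (4*κ^2+2*|κ|)*q₁ ≤ A₂*(q₁+τ) := by
      rw [hA₂def]
      nlinarith [mul_nonneg hC hq0.le,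
        mul_nonneg (by positivity : (0:ℝ) ≤ 4*κ^2+2*|κ|) hτ]
    have hfin := mul_le_mul_of_nonneg_right hcoef hY0
    have hq2bd := mul_le_mul_of_nonneg_left hqksq
      (by positivity : (0:ℝ) ≤ 4*κ^2+2*|κ|)
    have hk2bd := mul_le_mul_of_nonneg_left hlog2 (abs_nonneg κ)
    -- assemble
    have ht1 : |Real.log (1 + κ*(q₁/(1+q₁*((k:ℝ)-1))) + M k)
          - (κ*(q₁/(1+q₁*((k:ℝ)-1))) + M k)|
        ≤ 4*κ^2*(q₁/(1+q₁*((k:ℝ)-1)))^2 + 2*|M k| := by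
      calc _ ≤ 2*(κ*(q₁/(1+q₁*((k:ℝ)-1))) + M k)^2 := hlog1
        _ ≤ 4*κ^2*(q₁/(1+q₁*((k:ℝ)-1)))^2 + 4*(M k)^2 := by linarith
        _ ≤ 4*κ^2*(q₁/(1+q₁*((k:ℝ)-1)))^2 + 2*|M k| := by linarith
    linarith [habs, ht1, hMbd, hk2bd, hq2bd, hfin]
  -- key tail estimate
  have key : ∀ j m : ℕ, j ≤ m →
      |S m - S j| ≤ (C₀*(q₁+τ))/Real.sqrt (1+q₁*(j:ℝ)) := by
    intro j m hjm
    have h := tailBound (3*C) (A₂*(q₁+τ)) (by linarith) (mul_nonneg hA₂0 hqτ0)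
      hρ0 hρ1 K (fun n => by rw [hρdef, hKdef]; exact Kbound hL hq0.le hq1 n)
      hq0 hq1 e he j m hjm
    refine h.trans ?_
    have hnum : 3*C*q₁*K*(1-ρ)⁻¹ + 6*(A₂*(q₁+τ)) ≤ C₀*(q₁+τ) := by
      rw [hC₀def]
      nlinarith [mul_nonneg (mul_nonneg (mul_nonneg (by linarith : (0:ℝ) ≤ 3*C) hK0.le)
        hinvρ) hτ, mul_nonneg (mul_nonneg (mul_nonneg (by linarith : (0:ℝ) ≤ 3*C)
        hK0.le) hinvρ) hq0.le]
    have hden : (0:ℝ) < Real.sqrt (1+q₁*(j:ℝ)) :=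
      Real.sqrt_pos.mpr (by positivity)
    exact div_le_div_of_nonneg_right hnum hden.le
  -- Cauchy sequence and limit
  have hsqrt_atTop : Filter.Tendsto Real.sqrt Filter.atTop Filter.atTop := by
    rw [Filter.tendsto_atTop_atTop]
    intro b
    refine ⟨b^2, fun a ha => ?_⟩
    calc b ≤ |b| := le_abs_self b
      _ = Real.sqrt (b^2) := (Real.sqrt_sq_eq_abs b).symm
      _ ≤ Real.sqrt a := Real.sqrt_le_sqrt ha
  have hlin : Filter.Tendsto (fun N : ℕ => 1 + q₁*(N:ℝ)) Filter.atTop Filter.atTop :=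
    Filter.tendsto_atTop_add_const_left _ 1
      (Filter.Tendsto.const_mul_atTop hq0 tendsto_natCast_atTop_atTop)
  have hbto0 : Filter.Tendsto
      (fun N : ℕ => 2*(C₀*(q₁+τ)) * (Real.sqrt (1 + q₁*(N:ℝ)))⁻¹)
      Filter.atTop (nhds 0) := by
    have h1 : Filter.Tendsto (fun N : ℕ => (Real.sqrt (1 + q₁*(N:ℝ)))⁻¹)
        Filter.atTop (nhds 0) :=
      Filter.Tendsto.inv_tendsto_atTop (hsqrt_atTop.comp hlin)
    simpa using h1.const_mul (2*(C₀*(q₁+τ)))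
  have hcauchy : CauchySeq S := by
    apply cauchySeq_of_le_tendsto_0
      (fun N : ℕ => 2*(C₀*(q₁+τ)) * (Real.sqrt (1 + q₁*(N:ℝ)))⁻¹) _ hbto0
    intro n m N hn hm
    have h1 := key N n hn
    have h2 := key N m hm
    have h3 : dist (S n) (S m) ≤ |S n - S N| + |S m - S N| := by
      rw [Real.dist_eq]
      calc |S n - S m| = |(S n - S N) + (S N - S m)| := by ring_nf
        _ ≤ |S n - S N| + |S N - S m| := abs_add_le _ _
        _ = |S n - S N| + |S m - S N| := by rw [abs_sub_comm (S N) (S m)]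
    have h4 : (C₀*(q₁+τ))/Real.sqrt (1+q₁*(N:ℝ))
        = (C₀*(q₁+τ)) * (Real.sqrt (1 + q₁*(N:ℝ)))⁻¹ := div_eq_mul_inv _ _
    rw [h4] at h1 h2
    linarith
  obtain ⟨cκ, hcκ⟩ := cauchySeq_tendsto_of_complete hcauchy
  have hS0 : S 0 = 0 := by simp [hSdef]
  have hSbd : ∀ m : ℕ, |S m| ≤ C₀*(q₁+τ) := by
    intro m
    have := key 0 m (Nat.zero_le m)
    rw [hS0] at this
    simpa using this
  have hcκbd : |cκ| ≤ (C₀+1)*(q₁+τ) := by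
    have h1 : |cκ| ≤ C₀*(q₁+τ) :=
      le_of_tendsto hcκ.abs (Filter.Eventually.of_forall hSbd)
    nlinarith
  refine ⟨cκ, hcκbd, fun j => S j - cκ, ?_, ?_⟩
  · -- bound on r j
    intro j hj
    have hrlim : Filter.Tendsto (fun m => |S j - S m|) Filter.atTop (nhds |S j - cκ|) :=
      ((tendsto_const_nhds.sub hcκ).abs)
    have hrbd : |S j - cκ| ≤ (C₀*(q₁+τ))/Real.sqrt (1+q₁*(j:ℝ)) := by
      refine le_of_tendsto hrlim ?_
      filter_upwards [Filter.eventually_ge_atTop j] with m hm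
      rw [abs_sub_comm]
      exact key j m hm
    have hd1 : (0:ℝ) < Real.sqrt (1 + q₁*((j:ℝ)-1)) :=
      Real.sqrt_pos.mpr (hP0 j hj)
    have hd2 : Real.sqrt (1 + q₁*((j:ℝ)-1)) ≤ Real.sqrt (1+q₁*(j:ℝ)) := by
      apply Real.sqrt_le_sqrt
      nlinarith [hq0.le]
    refine hrbd.trans ?_
    apply div_le_div₀ (mul_nonneg (by linarith) hqτ0) (by linarith [hqτ0]) hd1 hd2
  · -- the flow identity
    intro j hj
    have hprod : Z (j+1) = Z 1 * ∏ k ∈ Finset.Icc 1 j,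
        (L^2 * Real.exp (-Real.pi * γ k)
          * (1 + κ*(q₁/(1+q₁*((k:ℝ)-1))) + M k)) := by
      induction j, hj using Nat.le_induction with
      | base => rw [hZ 1 le_rfl]; rw [Finset.Icc_self, Finset.prod_singleton]; ring
      | succ n hn ih =>
        rw [hZ (n+1) (by omega), ih, Finset.prod_Icc_succ_top (by omega : 1 ≤ n+1)]
        ring
    have hFpos : ∀ k : ℕ, 1 ≤ k → (0:ℝ) < L^2 * Real.exp (-Real.pi * γ k)
        * (1 + κ*(q₁/(1+q₁*((k:ℝ)-1))) + M k) := fun k hk =>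
      mul_pos (mul_pos (pow_pos hL0 2) (Real.exp_pos _)) (hapos k hk)
    -- product = exp of sum of logs
    have hstep1 : ∏ k ∈ Finset.Icc 1 j,
        (L^2 * Real.exp (-Real.pi * γ k) * (1 + κ*(q₁/(1+q₁*((k:ℝ)-1))) + M k))
        = Real.exp (∑ k ∈ Finset.Icc 1 j, Real.log
            (L^2 * Real.exp (-Real.pi * γ k)
              * (1 + κ*(q₁/(1+q₁*((k:ℝ)-1))) + M k))) := by
      rw [Real.exp_sum]
      refine Finset.prod_congr rfl fun k hk => ?_
      have hk1 : 1 ≤ k := (Finset.mem_Icc.mp hk).1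
      exact (Real.exp_log (hFpos k hk1)).symm
    have hlogF : ∀ k : ℕ, 1 ≤ k → Real.log
        (L^2 * Real.exp (-Real.pi * γ k) * (1 + κ*(q₁/(1+q₁*((k:ℝ)-1))) + M k))
        = 2*Real.log L + (-Real.pi * γ k)
          + Real.log (1 + κ*(q₁/(1+q₁*((k:ℝ)-1))) + M k) := by
      intro k hk
      rw [Real.log_mul (mul_ne_zero (pow_ne_zero 2 hL0.ne') (Real.exp_ne_zero _))
          (hapos k hk).ne',
        Real.log_mul (pow_ne_zero 2 hL0.ne') (Real.exp_ne_zero _),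
        Real.log_exp, Real.log_pow]
      push_cast
      ring
    -- telescoping sum of logs
    have hT : ∑ k ∈ Finset.Icc 1 j,
        (Real.log (1 + q₁*(k:ℝ)) - Real.log (1 + q₁*((k:ℝ)-1)))
        = Real.log (1 + q₁*(j:ℝ)) := by
      have hIco : Finset.Icc 1 j = Finset.Ico 1 (j+1) := by
        ext x; simp [Finset.mem_Icc, Finset.mem_Ico]
      rw [hIco, Finset.sum_Ico_eq_sum_range]
      have hcongr : ∀ i ∈ Finset.range (j+1-1),
          Real.log (1 + q₁*((1+i : ℕ):ℝ)) - Real.log (1 + q₁*(((1+i : ℕ):ℝ)-1))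
          = (fun n : ℕ => Real.log (1 + q₁*(n:ℝ))) (i+1)
            - (fun n : ℕ => Real.log (1 + q₁*(n:ℝ))) i := by
        intro i _
        have e1 : (1:ℝ) + q₁*((1+i : ℕ):ℝ) = 1 + q₁*((i+1 : ℕ):ℝ) := by push_cast; ring
        have e2 : (1:ℝ) + q₁*(((1+i : ℕ):ℝ)-1) = 1 + q₁*((i:ℕ):ℝ) := by push_cast; ring
        rw [e1, e2]
      rw [Finset.sum_congr rfl hcongr, Finset.sum_range_sub
        (fun n : ℕ => Real.log (1 + q₁*(n:ℝ)))]
      norm_num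
    -- sum of logs of a-factors
    have haS : ∑ k ∈ Finset.Icc 1 j,
        Real.log (1 + κ*(q₁/(1+q₁*((k:ℝ)-1))) + M k)
        = S j + κ * Real.log (1 + q₁*(j:ℝ)) := by
      have h1 : ∀ k ∈ Finset.Icc 1 j,
          Real.log (1 + κ*(q₁/(1+q₁*((k:ℝ)-1))) + M k)
          = e k + κ*(Real.log (1 + q₁*(k:ℝ)) - Real.log (1 + q₁*((k:ℝ)-1))) := by
        intro k _
        simp only [hedef]
        ring
      rw [Finset.sum_congr rfl h1, Finset.sum_add_distrib, ← Finset.mul_sum, hT, hSdef]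
    -- sum of the γ-part
    have hγS : ∑ k ∈ Finset.Icc 1 j, (2*Real.log L + (-Real.pi * γ k))
        = 2*(j:ℝ)*Real.log L
          + (-Real.pi * ∑ k ∈ Finset.Icc 1 j, (γ k - Real.log L/(2*Real.pi)))
          - (j:ℝ)*(Real.log L/2) := by
      have hcard : (Finset.Icc 1 j).card = j := by rw [Nat.card_Icc]; omega
      have h2 : ∑ k ∈ Finset.Icc 1 j, γ k
          = ∑ k ∈ Finset.Icc 1 j, (γ k - Real.log L/(2*Real.pi))
            + (j:ℝ)*(Real.log L/(2*Real.pi)) := by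
        rw [Finset.sum_sub_distrib, Finset.sum_const, hcard, nsmul_eq_mul]
        ring
      rw [Finset.sum_add_distrib, Finset.sum_const, hcard, nsmul_eq_mul,
        ← Finset.mul_sum, h2]
      have hπ : Real.pi ≠ 0 := Real.pi_ne_zero
      field_simp
      ring
    -- exponent identity
    have hEXP : ∑ k ∈ Finset.Icc 1 j, Real.log
        (L^2 * Real.exp (-Real.pi * γ k) * (1 + κ*(q₁/(1+q₁*((k:ℝ)-1))) + M k))
        = Real.log L * (3*(j:ℝ)/2) + Real.log (1 + q₁*(j:ℝ)) * κ
          + ((-Real.pi * ∑ k ∈ Finset.Icc 1 j, (γ k - Real.log L/(2*Real.pi)))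
            + cκ + (S j - cκ)) := by
      have h1 : ∀ k ∈ Finset.Icc 1 j, Real.log
          (L^2 * Real.exp (-Real.pi * γ k) * (1 + κ*(q₁/(1+q₁*((k:ℝ)-1))) + M k))
          = 2*Real.log L + (-Real.pi * γ k)
            + Real.log (1 + κ*(q₁/(1+q₁*((k:ℝ)-1))) + M k) := fun k hk =>
        hlogF k (Finset.mem_Icc.mp hk).1
      rw [Finset.sum_congr rfl h1, Finset.sum_add_distrib, hγS, haS]
      ring
    have hrpow1 : Real.exp (Real.log L * (3*(j:ℝ)/2)) = L ^ (3*(j:ℝ)/2) :=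
      (Real.rpow_def_of_pos hL0 _).symm
    have hrpow2 : Real.exp (Real.log (1 + q₁*(j:ℝ)) * κ) = (1 + q₁*(j:ℝ)) ^ κ :=
      (Real.rpow_def_of_pos (by positivity) _).symm
    rw [hprod, hstep1, hEXP, Real.exp_add, Real.exp_add, hrpow1, hrpow2]
    ring
end

section
/- There exist an integer j₀ ≥ 1 and a constant C₀ > 0, depending only on η, L and C (and not on q₁ nor on the particular sequences), such that for all data as in the context: for m = 1,2 the limits Q̄_{1,m} := lim_{j→∞} Q(j,j₀)_{1,m} exist; the series Σ_{d≥j₀} ℓ_{j₀}⋯ℓ_{d−1} m_{−,d} converges absolutely; |Q̄_{1,1} − 1| ≤ C₀ √q₁ and |Q̄_{1,2} − Σ_{d≥j₀} ℓ_{j₀}⋯ℓ_{d−1} m_{−,d}| ≤ C₀ q₁^{3/2}; and for every j ≥ j₀: |Q(j,j₀)_{1,m} − Q̄_{1,m}| ≤ C₀ q_j for m = 1,2, |Q(j,j₀)_{2,1}| ≤ C₀ q_j, and |Q(j,j₀)_{2,2} − ℓ_{j₀}⋯ℓ_j| ≤ C₀ q₁ q_j. -/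
/-- The single-step matrix `M_n` with rows `(1, m_{−,n})` and `(m_{+,n}, ℓ_n)`. -/
def Mmat (ℓ mp mm : ℕ → ℝ) (n : ℕ) : Matrix (Fin 2) (Fin 2) ℝ :=
  !![1, mm n; mp n, ℓ n]

/-- The ordered product `Q(f,i) = M_f M_{f−1} ⋯ M_i` (the identity when `f < i`). -/
def Qmat (ℓ mp mm : ℕ → ℝ) (f i : ℕ) : Matrix (Fin 2) (Fin 2) ℝ :=
  (((List.range (f + 1 - i)).map fun t => Mmat ℓ mp mm (f - t)).prod)

namespace St16

lemma Qmat_succ (ℓ mp mm : ℕ → ℝ) (f i : ℕ) (h : i ≤ f + 1) :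
    Qmat ℓ mp mm (f + 1) i = Mmat ℓ mp mm (f + 1) * Qmat ℓ mp mm f i := by
  unfold Qmat
  have h2 : f + 1 + 1 - i = (f + 1 - i) + 1 := by omega
  rw [h2, List.range_succ_eq_map]
  simp only [List.map_cons, List.map_map, List.prod_cons, Nat.sub_zero]
  congr 2
  ext t
  simp [Function.comp, Nat.succ_sub_succ]

lemma Qmat_self (ℓ mp mm : ℕ → ℝ) (f : ℕ) :
    Qmat ℓ mp mm f f = Mmat ℓ mp mm f := by
  unfold Qmat
  have : f + 1 - f = 1 := by omega
  rw [this, List.range_succ]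
  simp

lemma mul_apply2 (M N : Matrix (Fin 2) (Fin 2) ℝ) (i j : Fin 2) :
    (M * N) i j = M i 0 * N 0 j + M i 1 * N 1 j := by
  rw [Matrix.mul_apply, Fin.sum_univ_two]

lemma Mmat00 (ℓ mp mm : ℕ → ℝ) (n : ℕ) : Mmat ℓ mp mm n 0 0 = 1 := rfl
lemma Mmat01 (ℓ mp mm : ℕ → ℝ) (n : ℕ) : Mmat ℓ mp mm n 0 1 = mm n := rfl
lemma Mmat10 (ℓ mp mm : ℕ → ℝ) (n : ℕ) : Mmat ℓ mp mm n 1 0 = mp n := rfl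
lemma Mmat11 (ℓ mp mm : ℕ → ℝ) (n : ℕ) : Mmat ℓ mp mm n 1 1 = ℓ n := rfl

lemma Qmat_succ_entry (ℓ mp mm : ℕ → ℝ) (f i : ℕ) (h : i ≤ f + 1) (x y : Fin 2) :
    Qmat ℓ mp mm (f + 1) i x y =
      Mmat ℓ mp mm (f + 1) x 0 * Qmat ℓ mp mm f i 0 y
      + Mmat ℓ mp mm (f + 1) x 1 * Qmat ℓ mp mm f i 1 y := by
  rw [Qmat_succ ℓ mp mm f i h, mul_apply2]

noncomputable def qs (q₁ : ℝ) (j : ℕ) : ℝ := q₁ / (1 + q₁ * ((j : ℝ) - 1))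

section qlemmas

variable {q₁ : ℝ} (hq : 0 < q₁) (h4 : q₁ ≤ 1 / 4)
include hq h4

lemma den_pos (j : ℕ) : 0 < 1 + q₁ * ((j : ℝ) - 1) := by
  have hj : (0:ℝ) ≤ (j:ℝ) := Nat.cast_nonneg j
  nlinarith

lemma qs_pos (j : ℕ) : 0 < qs q₁ j := div_pos hq (den_pos hq h4 j)

lemma qs_anti {j k : ℕ} (hjk : j ≤ k) : qs q₁ k ≤ qs q₁ j := by
  apply div_le_div_of_nonneg_left hq.le (den_pos hq h4 j)
  have : (j:ℝ) ≤ (k:ℝ) := Nat.cast_le.mpr hjk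
  nlinarith

lemma qs_le_inv {j : ℕ} (hj : 1 ≤ j) : qs q₁ j ≤ 1 / ((j:ℝ) + 3) := by
  have hj' : (1:ℝ) ≤ (j:ℝ) := by exact_mod_cast hj
  rw [qs, div_le_div_iff₀ (den_pos hq h4 j) (by linarith)]
  nlinarith

lemma qs_le_self {j : ℕ} (hj : 1 ≤ j) : qs q₁ j ≤ q₁ := by
  have := qs_anti hq h4 hj
  simpa [qs] using this

lemma qs_tel (j : ℕ) : qs q₁ j * qs q₁ (j + 1) = qs q₁ j - qs q₁ (j + 1) := by
  have h1 := den_pos hq h4 j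
  have h2 := den_pos hq h4 (j + 1)
  unfold qs
  push_cast at h1 h2 ⊢
  field_simp
  ring

lemma qs_ratio {j : ℕ} (hj : 1 ≤ j) {a : ℕ} (ha : 1 ≤ a) (haj : a ≤ j) :
    qs q₁ j ≤ (1 + 1 / ((a:ℝ) + 3)) * qs q₁ (j + 1) := by
  have h1 := den_pos hq h4 j
  have h2 := den_pos hq h4 (j + 1)
  have key : qs q₁ j = (1 + qs q₁ j) * qs q₁ (j + 1) := by
    unfold qs
    push_cast at h1 h2 ⊢
    field_simp
    ring
  rw [key]
  have hle : qs q₁ j ≤ 1 / ((a:ℝ) + 3) := by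
    refine (qs_anti hq h4 haj).trans ?_
    exact qs_le_inv hq h4 ha
  have := qs_pos hq h4 (j + 1)
  nlinarith [qs_pos hq h4 j]

end qlemmas

lemma geom_partial {θ : ℝ} (h0 : 0 ≤ θ) (h1 : θ < 1) (n : ℕ) :
    ∑ k ∈ Finset.range n, θ ^ k ≤ 1 / (1 - θ) := by
  have h1' : (0:ℝ) < 1 - θ := by linarith
  rw [geom_sum_eq h1.ne]
  have heq : (θ ^ n - 1) / (θ - 1) = (1 - θ ^ n) / (1 - θ) := by
    rw [← neg_div_neg_eq]; ring_nf
  rw [heq]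
  have hn : (1:ℝ) - θ ^ n ≤ 1 := by nlinarith [pow_nonneg h0 n]
  gcongr

end St16


open St16 Filter Finset

set_option maxHeartbeats 1000000 in
/-- Convergence of the tail block `Q(j,j₀)` of the matrix product
governing the coupled flow of the two fractional-charge renormalization constants for
`0 ≤ η < 1/2` (with `η̄ = η − 1`), with quantitative error bounds. -/
theorem statement16 (η : ℝ) (hη0 : 0 ≤ η) (hη : η < 1 / 2)
    (L C : ℝ) (hL : 1 < L) (hC : 0 < C) :
    ∃ j₀ : ℕ, 1 ≤ j₀ ∧ ∃ C₀ : ℝ, 0 < C₀ ∧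
      ∀ q₁ : ℝ, 0 < q₁ → q₁ ≤ 1 / 4 →
        ∀ ℓ mp mm : ℕ → ℝ,
          (∀ j : ℕ, 1 ≤ j →
            |ℓ j| ≤ L ^ (-(2 : ℝ) * ((η - 1) ^ 2 - η ^ 2)) *
              (1 + C * (q₁ / (1 + q₁ * ((j : ℝ) - 1))) + C * L ^ (-(j : ℝ) / 4))) →
          (∀ j : ℕ, 1 ≤ j → |mp j| ≤ C * (q₁ / (1 + q₁ * ((j : ℝ) - 1)))) →
          (∀ j : ℕ, 1 ≤ j → |mm j| ≤ C * (q₁ / (1 + q₁ * ((j : ℝ) - 1)))) →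
          ∃ Qb1 Qb2 : ℝ,
            Filter.Tendsto (fun j : ℕ => Qmat ℓ mp mm j j₀ 0 0)
              Filter.atTop (nhds Qb1) ∧
            Filter.Tendsto (fun j : ℕ => Qmat ℓ mp mm j j₀ 0 1)
              Filter.atTop (nhds Qb2) ∧
            Summable (fun d : ℕ =>
              |(∏ k ∈ Finset.Ico j₀ (j₀ + d), ℓ k) * mm (j₀ + d)|) ∧
            |Qb1 - 1| ≤ C₀ * Real.sqrt q₁ ∧
            |Qb2 - ∑' d : ℕ, (∏ k ∈ Finset.Ico j₀ (j₀ + d), ℓ k) * mm (j₀ + d)|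
              ≤ C₀ * q₁ ^ ((3 : ℝ) / 2) ∧
            ∀ j : ℕ, j₀ ≤ j →
              |Qmat ℓ mp mm j j₀ 0 0 - Qb1| ≤ C₀ * (q₁ / (1 + q₁ * ((j : ℝ) - 1))) ∧
              |Qmat ℓ mp mm j j₀ 0 1 - Qb2| ≤ C₀ * (q₁ / (1 + q₁ * ((j : ℝ) - 1))) ∧
              |Qmat ℓ mp mm j j₀ 1 0| ≤ C₀ * (q₁ / (1 + q₁ * ((j : ℝ) - 1))) ∧
              |Qmat ℓ mp mm j j₀ 1 1 - ∏ k ∈ Finset.Icc j₀ j, ℓ k|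
                ≤ C₀ * q₁ * (q₁ / (1 + q₁ * ((j : ℝ) - 1))) := by
  have hL0 : (0:ℝ) < L := by linarith
  obtain ⟨lam, hlam_def⟩ : ∃ lam : ℝ, lam = L ^ (-(2 : ℝ) * ((η - 1) ^ 2 - η ^ 2)) := ⟨_, rfl⟩
  have hlam_pos : 0 < lam := hlam_def ▸ Real.rpow_pos_of_pos hL0 _
  have hexp : -(2 : ℝ) * ((η - 1) ^ 2 - η ^ 2) < 0 := by nlinarith
  have hlam1 : lam < 1 := hlam_def ▸ Real.rpow_lt_one_of_one_lt_of_neg hL hexp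
  obtain ⟨θ, hθ_def⟩ : ∃ θ : ℝ, θ = (1 + lam) / 2 := ⟨_, rfl⟩
  have hθ0 : 0 < θ := by rw [hθ_def]; linarith
  have hθ1 : θ < 1 := by rw [hθ_def]; linarith
  have hlamθ : lam < θ := by rw [hθ_def]; linarith
  obtain ⟨μ, hμ_def⟩ : ∃ μ : ℝ, μ = (1 + θ) / 2 := ⟨_, rfl⟩
  have hμ0 : 0 < μ := by rw [hμ_def]; linarith
  have hμ1 : μ < 1 := by rw [hμ_def]; linarith
  have hθμ : θ < μ := by rw [hμ_def]; linarith
  have hμ1' : (0:ℝ) < 1 - μ := by linarith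
  have hθ1' : (0:ℝ) < 1 - θ := by linarith
  obtain ⟨K, hK_def⟩ : ∃ K : ℝ, K = 2 * C / (1 - μ) := ⟨_, rfl⟩
  have hK_pos : 0 < K := by rw [hK_def]; positivity
  have hKid : 2 * C + μ * K = K := by rw [hK_def]; field_simp; ring
  have hCK : C ≤ K := by
    rw [hK_def, le_div_iff₀ hμ1']; nlinarith
  obtain ⟨KB, hKB_def⟩ : ∃ KB : ℝ, KB = C + C / (1 - θ) + 1 := ⟨_, rfl⟩
  have hKB_pos : 0 < KB := by rw [hKB_def]; positivity
  obtain ⟨KD, hKD_def⟩ : ∃ KD : ℝ, KD = C * KB / (1 - μ) := ⟨_, rfl⟩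
  have hKD_pos : 0 < KD := by rw [hKD_def]; positivity
  have hKDid : C * KB + μ * KD = KD := by rw [hKD_def]; field_simp; ring
  obtain ⟨r, hr_def⟩ : ∃ r : ℝ, r = L ^ (-(1:ℝ) / 4) := ⟨_, rfl⟩
  have hr0 : 0 < r := hr_def ▸ Real.rpow_pos_of_pos hL0 _
  have hr1 : r < 1 := hr_def ▸ Real.rpow_lt_one_of_one_lt_of_neg hL (by norm_num)
  -- choice of j₀ = a
  obtain ⟨N₀, hN₀⟩ := exists_nat_gt (max (max (2 * lam * C / (θ - lam)) (θ / (μ - θ)))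
      (max (C * K) (C * KD)))
  obtain ⟨N₁, hN₁⟩ : ∃ N : ℕ, ∀ n ≥ N, lam * C * r ^ n ≤ (θ - lam) / 2 := by
    have h := (tendsto_pow_atTop_nhds_zero_of_lt_one hr0.le hr1).const_mul (lam * C)
    rw [mul_zero] at h
    have := h.eventually_le_const (show (0:ℝ) < (θ - lam) / 2 by linarith)
    exact eventually_atTop.mp this
  obtain ⟨a, ha_def⟩ : ∃ a : ℕ, a = max (max N₀ N₁) 1 := ⟨_, rfl⟩
  have ha1 : 1 ≤ a := ha_def ▸ le_max_right _ 1
  have haN₀ : (N₀ : ℝ) ≤ (a : ℝ) + 3 := by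
    have : N₀ ≤ a := ha_def ▸ le_trans (le_max_left _ _) (le_max_left _ _)
    have : (N₀:ℝ) ≤ (a:ℝ) := Nat.cast_le.mpr this
    linarith
  have ha3 : (0:ℝ) < (a : ℝ) + 3 := by positivity
  have hcond1 : lam * C * (1 / ((a:ℝ) + 3)) ≤ (θ - lam) / 2 := by
    have h1 : 2 * lam * C / (θ - lam) ≤ (a:ℝ) + 3 :=
      le_trans (le_of_lt (lt_of_le_of_lt (le_max_left _ _) (lt_of_le_of_lt (le_max_left _ _) hN₀))) haN₀
    rw [div_le_iff₀ (by linarith)] at h1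
    rw [mul_one_div, div_le_div_iff₀ ha3 (by norm_num : (0:ℝ) < 2)]
    nlinarith
  have hcond2 : θ * (1 + 1 / ((a:ℝ) + 3)) ≤ μ := by
    have h1 : θ / (μ - θ) ≤ (a:ℝ) + 3 :=
      le_trans (le_of_lt (lt_of_le_of_lt (le_max_right _ _) (lt_of_le_of_lt (le_max_left _ _) hN₀))) haN₀
    rw [div_le_iff₀ (by linarith)] at h1
    have h2 : θ * (1 / ((a:ℝ) + 3)) ≤ μ - θ := by
      rw [mul_one_div, div_le_iff₀ ha3]; linarith
    have h3 : θ * (1 + 1 / ((a:ℝ) + 3)) = θ + θ * (1 / ((a:ℝ) + 3)) := by ring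
    linarith
  have hcond3 : C * K * (1 / ((a:ℝ) + 3)) ≤ 1 := by
    have h1 : C * K ≤ (a:ℝ) + 3 :=
      le_trans (le_of_lt (lt_of_le_of_lt (le_max_left _ _) (lt_of_le_of_lt (le_max_right _ _) hN₀))) haN₀
    rw [mul_one_div, div_le_one ha3]; linarith
  have hcond4 : C * KD * (1 / ((a:ℝ) + 3)) ≤ 1 := by
    have h1 : C * KD ≤ (a:ℝ) + 3 :=
      le_trans (le_of_lt (lt_of_le_of_lt (le_max_right _ _) (lt_of_le_of_lt (le_max_right _ _) hN₀))) haN₀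
    rw [mul_one_div, div_le_one ha3]; linarith
  have hcond5 : ∀ j : ℕ, a ≤ j → lam * C * r ^ j ≤ (θ - lam) / 2 := by
    intro j hj
    exact hN₁ j (le_trans (le_trans (le_max_right N₀ N₁) (ha_def ▸ le_max_left _ _)) hj)
  obtain ⟨C₀, hC₀_def⟩ : ∃ C₀ : ℝ, C₀ = C * K + K + C / (1 - θ) + C * KD + KD + 1 := ⟨_, rfl⟩
  have hC₀_pos : 0 < C₀ := by rw [hC₀_def]; positivity
  refine ⟨a, ha1, C₀, hC₀_pos, ?_⟩
  intro q₁ hq₁ h14 ℓ mp mm hℓ hmp hmm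
  have hLrj : ∀ j : ℕ, L ^ (-(j:ℝ)/4) = r ^ j := by
    intro j
    rw [hr_def, show -(j:ℝ)/4 = -(1:ℝ)/4 * (j:ℝ) by ring, Real.rpow_mul hL0.le,
      Real.rpow_natCast]
  have hmp' : ∀ j : ℕ, 1 ≤ j → |mp j| ≤ C * qs q₁ j := hmp
  have hmm' : ∀ j : ℕ, 1 ≤ j → |mm j| ≤ C * qs q₁ j := hmm
  have hθstep : ∀ j : ℕ, a ≤ j → |ℓ j| ≤ θ := by
    intro j hj
    have h1j : 1 ≤ j := le_trans ha1 hj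
    have h1 : |ℓ j| ≤ lam * (1 + C * qs q₁ j + C * L ^ (-(j:ℝ)/4)) := by
      rw [hlam_def]; exact hℓ j h1j
    rw [hLrj] at h1
    have hqj : qs q₁ j ≤ 1/((a:ℝ)+3) := by
      refine (qs_le_inv hq₁ h14 h1j).trans ?_
      have hcast : ((a:ℝ)) ≤ (j:ℝ) := Nat.cast_le.mpr hj
      rw [div_le_div_iff₀ (by linarith) ha3]; linarith
    have h5 := hcond5 j hj
    have e1 : lam * C * qs q₁ j ≤ (θ - lam)/2 := by
      have h6 : lam * C * qs q₁ j ≤ lam * C * (1/((a:ℝ)+3)) :=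
        mul_le_mul_of_nonneg_left hqj (by positivity)
      linarith
    calc |ℓ j| ≤ lam * (1 + C * qs q₁ j + C * r ^ j) := h1
      _ = lam + lam * C * qs q₁ j + lam * C * r ^ j := by ring
      _ ≤ lam + (θ - lam)/2 + (θ - lam)/2 := by linarith
      _ = θ := by ring
  -- the four entry sequences, relative to base point a
  set Av : ℕ → ℝ := fun n => Qmat ℓ mp mm (a+n) a 0 0 with hAv_def
  set Bv : ℕ → ℝ := fun n => Qmat ℓ mp mm (a+n) a 0 1 with hBv_def
  set Pv : ℕ → ℝ := fun n => Qmat ℓ mp mm (a+n) a 1 0 with hPv_def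
  set Dv : ℕ → ℝ := fun n => Qmat ℓ mp mm (a+n) a 1 1 with hDv_def
  have hrec : ∀ (n : ℕ) (x y : Fin 2), Qmat ℓ mp mm (a+(n+1)) a x y =
      Mmat ℓ mp mm (a+n+1) x 0 * Qmat ℓ mp mm (a+n) a 0 y
      + Mmat ℓ mp mm (a+n+1) x 1 * Qmat ℓ mp mm (a+n) a 1 y :=
    fun n x y => Qmat_succ_entry ℓ mp mm (a+n) a (by omega) x y
  have hrecA : ∀ n, Av (n+1) = Av n + mm (a+n+1) * Pv n := by
    intro n
    have h := hrec n 0 0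
    rw [Mmat00, Mmat01, one_mul] at h
    exact h
  have hrecB : ∀ n, Bv (n+1) = Bv n + mm (a+n+1) * Dv n := by
    intro n
    have h := hrec n 0 1
    rw [Mmat00, Mmat01, one_mul] at h
    exact h
  have hrecP : ∀ n, Pv (n+1) = mp (a+n+1) * Av n + ℓ (a+n+1) * Pv n := by
    intro n
    have h := hrec n 1 0
    rw [Mmat10, Mmat11] at h
    exact h
  have hrecD : ∀ n, Dv (n+1) = mp (a+n+1) * Bv n + ℓ (a+n+1) * Dv n := by
    intro n
    have h := hrec n 1 1
    rw [Mmat10, Mmat11] at h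
    exact h
  have hA0 : Av 0 = 1 := by
    show Qmat ℓ mp mm (a+0) a 0 0 = 1
    rw [Nat.add_zero, Qmat_self, Mmat00]
  have hB0 : Bv 0 = mm a := by
    show Qmat ℓ mp mm (a+0) a 0 1 = mm a
    rw [Nat.add_zero, Qmat_self, Mmat01]
  have hP0 : Pv 0 = mp a := by
    show Qmat ℓ mp mm (a+0) a 1 0 = mp a
    rw [Nat.add_zero, Qmat_self, Mmat10]
  have hD0 : Dv 0 = ℓ a := by
    show Qmat ℓ mp mm (a+0) a 1 1 = ℓ a
    rw [Nat.add_zero, Qmat_self, Mmat11]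
  -- q facts
  have hq_pos : ∀ j : ℕ, 0 < qs q₁ j := fun j => qs_pos hq₁ h14 j
  have hq_tel : ∀ j : ℕ, qs q₁ j * qs q₁ (j+1) = qs q₁ j - qs q₁ (j+1) :=
    fun j => qs_tel hq₁ h14 j
  have hq_ratio : ∀ n : ℕ, θ * qs q₁ (a+n) ≤ μ * qs q₁ (a+n+1) := by
    intro n
    have h1 : qs q₁ (a+n) ≤ (1 + 1/((a:ℝ)+3)) * qs q₁ (a+n+1) :=
      qs_ratio hq₁ h14 (by omega) ha1 (by omega)
    have h2 : θ * qs q₁ (a+n) ≤ θ * ((1 + 1/((a:ℝ)+3)) * qs q₁ (a+n+1)) :=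
      mul_le_mul_of_nonneg_left h1 hθ0.le
    have h4 : (θ * (1 + 1/((a:ℝ)+3))) * qs q₁ (a+n+1) ≤ μ * qs q₁ (a+n+1) :=
      mul_le_mul_of_nonneg_right hcond2 (hq_pos _).le
    linarith only [h2, h4]
  have hqa_inv : qs q₁ a ≤ 1/((a:ℝ)+3) := qs_le_inv hq₁ h14 ha1
  -- P/A joint induction
  have hPA : ∀ n, |Pv n| ≤ K * qs q₁ (a+n) ∧
      |Av n - 1| ≤ C * K * (qs q₁ a - qs q₁ (a+n)) := by
    intro n
    induction n with
    | zero =>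
      refine ⟨?_, ?_⟩
      · rw [hP0]
        calc |mp a| ≤ C * qs q₁ a := hmp' a ha1
          _ ≤ K * qs q₁ a := mul_le_mul_of_nonneg_right hCK (hq_pos _).le
      · rw [hA0]
        simp
    | succ n ih =>
      obtain ⟨ihP, ihA⟩ := ih
      have hAn2 : |Av n| ≤ 2 := by
        have h1 : C * K * (qs q₁ a - qs q₁ (a+n)) ≤ C * K * qs q₁ a :=
          mul_le_mul_of_nonneg_left (by linarith [hq_pos (a+n)]) (by positivity)
        have h2 : C * K * qs q₁ a ≤ C * K * (1/((a:ℝ)+3)) :=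
          mul_le_mul_of_nonneg_left hqa_inv (by positivity)
        have h3 : |Av n - 1| ≤ 1 := by linarith [hcond3]
        calc |Av n| = |(Av n - 1) + 1| := by ring_nf
          _ ≤ |Av n - 1| + |(1:ℝ)| := abs_add_le _ _
          _ ≤ 2 := by rw [abs_one]; linarith
      refine ⟨?_, ?_⟩
      · rw [hrecP n]
        have t1 : |mp (a+n+1)| ≤ C * qs q₁ (a+n+1) := hmp' _ (by omega)
        have t2 : |ℓ (a+n+1)| ≤ θ := hθstep _ (by omega)
        calc |mp (a+n+1) * Av n + ℓ (a+n+1) * Pv n|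
            ≤ |mp (a+n+1)| * |Av n| + |ℓ (a+n+1)| * |Pv n| := by
              refine (abs_add_le _ _).trans ?_
              rw [abs_mul, abs_mul]
          _ ≤ (C * qs q₁ (a+n+1)) * 2 + θ * (K * qs q₁ (a+n)) := by
              refine add_le_add
                (mul_le_mul t1 hAn2 (abs_nonneg _) (mul_nonneg hC.le (hq_pos _).le)) ?_
              exact mul_le_mul t2 ihP (abs_nonneg _) hθ0.le
          _ ≤ (C * qs q₁ (a+n+1)) * 2 + μ * qs q₁ (a+n+1) * K := by
              have h7 := mul_le_mul_of_nonneg_left (hq_ratio n) hK_pos.le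
              linarith only [h7]
          _ = (2*C + μ*K) * qs q₁ (a+n+1) := by ring
          _ = K * qs q₁ (a+n+1) := by rw [hKid]
      · rw [hrecA n]
        have t1 : |mm (a+n+1)| ≤ C * qs q₁ (a+n+1) := hmm' _ (by omega)
        have key : |mm (a+n+1) * Pv n| ≤ C * K * (qs q₁ (a+n) - qs q₁ (a+n+1)) := by
          rw [abs_mul, ← hq_tel (a+n)]
          calc |mm (a+n+1)| * |Pv n|
              ≤ (C * qs q₁ (a+n+1)) * (K * qs q₁ (a+n)) :=
                mul_le_mul t1 ihP (abs_nonneg _) (mul_nonneg hC.le (hq_pos _).le)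
            _ = C * K * (qs q₁ (a+n) * qs q₁ (a+n+1)) := by ring
        calc |Av n + mm (a+n+1)*Pv n - 1|
            = |(Av n - 1) + mm (a+n+1)*Pv n| := by ring_nf
          _ ≤ |Av n - 1| + |mm (a+n+1)*Pv n| := abs_add_le _ _
          _ ≤ C*K*(qs q₁ a - qs q₁ (a+n)) + C*K*(qs q₁ (a+n) - qs q₁ (a+n+1)) :=
              add_le_add ihA key
          _ = C*K*(qs q₁ a - qs q₁ (a+n+1)) := by ring
  -- partial products of ℓ
  set Piv : ℕ → ℝ := fun n => ∏ k ∈ Finset.Icc a (a+n), ℓ k with hPiv_def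
  have hPi_rec : ∀ n, Piv (n+1) = Piv n * ℓ (a+n+1) := by
    intro n
    show (∏ k ∈ Finset.Icc a (a+(n+1)), ℓ k) = _
    exact Finset.prod_Icc_succ_top (Nat.le_succ_of_le (Nat.le_add_right a n)) ℓ
  have hPi0 : Piv 0 = ℓ a := by
    show (∏ k ∈ Finset.Icc a (a+0), ℓ k) = ℓ a
    rw [Nat.add_zero, Finset.Icc_self, Finset.prod_singleton]
  have hPi_abs : ∀ n, |Piv n| ≤ θ^(n+1) := by
    intro n
    induction n with
    | zero => rw [hPi0, pow_one]; exact hθstep a le_rfl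
    | succ n ih =>
      rw [hPi_rec n, abs_mul, pow_succ]
      exact mul_le_mul ih (hθstep _ (by omega)) (abs_nonneg _) (pow_nonneg hθ0.le _)
  have hqaq1 : qs q₁ a ≤ q₁ := qs_le_self hq₁ h14 ha1
  have hSθ : ∀ n, ∑ k ∈ Finset.range n, θ^(k+1) ≤ 1/(1-θ) := by
    intro n
    calc ∑ k ∈ Finset.range n, θ^(k+1) ≤ ∑ k ∈ Finset.range n, θ^k :=
          Finset.sum_le_sum fun k _ => pow_le_pow_of_le_one hθ0.le hθ1.le (by omega)
      _ ≤ 1/(1-θ) := geom_partial hθ0.le hθ1 n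
  have hSθ_nonneg : ∀ n, (0:ℝ) ≤ ∑ k ∈ Finset.range n, θ^(k+1) := fun n =>
    Finset.sum_nonneg fun k _ => pow_nonneg hθ0.le _
  -- B/D joint induction
  have hBD : ∀ n, |Bv n| ≤ C * qs q₁ a * (1 + ∑ k ∈ Finset.range n, θ^(k+1))
        + C * KD * q₁ * (qs q₁ a - qs q₁ (a+n))
      ∧ |Dv n - Piv n| ≤ KD * q₁ * qs q₁ (a+n) := by
    intro n
    induction n with
    | zero =>
      refine ⟨?_, ?_⟩
      · rw [hB0]
        have h1 := hmm' a ha1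
        simp only [Finset.range_zero, Finset.sum_empty, Nat.add_zero, sub_self,
          mul_zero, add_zero]
        linarith only [h1, mul_nonneg hC.le (hq_pos a).le]
      · rw [hD0, hPi0, sub_self, abs_zero, Nat.add_zero]
        exact mul_nonneg (mul_nonneg hKD_pos.le hq₁.le) (hq_pos a).le
    | succ n ih =>
      obtain ⟨ihB, ihD⟩ := ih
      have hBn_le : |Bv n| ≤ KB * q₁ := by
        have s1 := hSθ n
        have e1 : C * qs q₁ a * (1 + ∑ k ∈ Finset.range n, θ^(k+1))
            ≤ C * qs q₁ a * (1 + 1/(1-θ)) :=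
          mul_le_mul_of_nonneg_left (by linarith only [s1])
            (mul_nonneg hC.le (hq_pos a).le)
        have e2 : C * qs q₁ a * (1 + 1/(1-θ)) ≤ C * q₁ * (1 + 1/(1-θ)) := by
          refine mul_le_mul_of_nonneg_right ?_ (by positivity)
          exact mul_le_mul_of_nonneg_left hqaq1 hC.le
        have e3 : C * KD * q₁ * (qs q₁ a - qs q₁ (a+n)) ≤ q₁ := by
          have h8 : C * KD * qs q₁ a ≤ C * KD * (1/((a:ℝ)+3)) :=
            mul_le_mul_of_nonneg_left hqa_inv (by positivity)
          have h9 : qs q₁ a - qs q₁ (a+n) ≤ qs q₁ a := by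
            linarith only [hq_pos (a+n)]
          have h10 : C * KD * q₁ * (qs q₁ a - qs q₁ (a+n)) ≤ C * KD * q₁ * qs q₁ a := by
            refine mul_le_mul_of_nonneg_left h9 (by positivity)
          have h11 : C * KD * q₁ * qs q₁ a = (C * KD * qs q₁ a) * q₁ := by ring
          have h12 : (C * KD * qs q₁ a) * q₁ ≤ 1 * q₁ :=
            mul_le_mul_of_nonneg_right (by linarith only [h8, hcond4]) hq₁.le
          linarith only [h10, h12, h11.le, h11.ge]
        have hKBq : C * q₁ * (1 + 1/(1-θ)) + q₁ = KB * q₁ := by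
          rw [hKB_def]; field_simp
        linarith only [ihB, e1, e2, e3, hKBq.le, hKBq.ge]
      refine ⟨?_, ?_⟩
      · -- B step
        rw [hrecB n]
        have t1 : |mm (a+n+1)| ≤ C * qs q₁ (a+n+1) := hmm' _ (by omega)
        have hDvn : |Dv n| ≤ θ^(n+1) + KD * q₁ * qs q₁ (a+n) := by
          have := abs_sub_abs_le_abs_sub (Dv n) (Piv n)
          linarith only [this, hPi_abs n, ihD]
        have key : |mm (a+n+1) * Dv n|
            ≤ C * qs q₁ a * θ^(n+1) + C * KD * q₁ * (qs q₁ (a+n) - qs q₁ (a+n+1)) := by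
          rw [abs_mul]
          have h20 : |mm (a+n+1)| * |Dv n|
              ≤ (C * qs q₁ (a+n+1)) * (θ^(n+1) + KD * q₁ * qs q₁ (a+n)) :=
            mul_le_mul t1 hDvn (abs_nonneg _) (mul_nonneg hC.le (hq_pos _).le)
          have h21 : (C * qs q₁ (a+n+1)) * θ^(n+1) ≤ (C * qs q₁ a) * θ^(n+1) := by
            refine mul_le_mul_of_nonneg_right ?_ (pow_nonneg hθ0.le _)
            exact mul_le_mul_of_nonneg_left (qs_anti hq₁ h14 (by omega)) hC.le
          have h22 : (C * qs q₁ (a+n+1)) * (KD * q₁ * qs q₁ (a+n))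
              = C * KD * q₁ * (qs q₁ (a+n) * qs q₁ (a+n+1)) := by ring
          have h24 : C * KD * q₁ * (qs q₁ (a+n) * qs q₁ (a+n+1))
              = C * KD * q₁ * (qs q₁ (a+n) - qs q₁ (a+n+1)) := by rw [hq_tel (a+n)]
          linarith only [h20, h21, h22.le, h22.ge, h24.le, h24.ge]
        calc |Bv n + mm (a+n+1) * Dv n| ≤ |Bv n| + |mm (a+n+1) * Dv n| := abs_add_le _ _
          _ ≤ (C * qs q₁ a * (1 + ∑ k ∈ Finset.range n, θ^(k+1))
                + C * KD * q₁ * (qs q₁ a - qs q₁ (a+n)))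
              + (C * qs q₁ a * θ^(n+1)
                + C * KD * q₁ * (qs q₁ (a+n) - qs q₁ (a+n+1))) := add_le_add ihB key
          _ = C * qs q₁ a * (1 + (∑ k ∈ Finset.range n, θ^(k+1) + θ^(n+1)))
              + C * KD * q₁ * (qs q₁ a - qs q₁ (a+n+1)) := by ring
          _ = C * qs q₁ a * (1 + ∑ k ∈ Finset.range (n+1), θ^(k+1))
              + C * KD * q₁ * (qs q₁ a - qs q₁ (a+n+1)) := by
            rw [Finset.sum_range_succ]
      · -- D step
        rw [hrecD n, hPi_rec n]
        have t1 : |mp (a+n+1)| ≤ C * qs q₁ (a+n+1) := hmp' _ (by omega)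
        have t2 : |ℓ (a+n+1)| ≤ θ := hθstep _ (by omega)
        have e0 : mp (a+n+1) * Bv n + ℓ (a+n+1) * Dv n - Piv n * ℓ (a+n+1)
            = mp (a+n+1) * Bv n + ℓ (a+n+1) * (Dv n - Piv n) := by ring
        rw [e0]
        have e1 : |mp (a+n+1) * Bv n| ≤ (C * qs q₁ (a+n+1)) * (KB * q₁) := by
          rw [abs_mul]
          exact mul_le_mul t1 hBn_le (abs_nonneg _) (mul_nonneg hC.le (hq_pos _).le)
        have e2 : |ℓ (a+n+1) * (Dv n - Piv n)| ≤ θ * (KD * q₁ * qs q₁ (a+n)) := by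
          rw [abs_mul]
          exact mul_le_mul t2 ihD (abs_nonneg _) hθ0.le
        have e3 : θ * (KD * q₁ * qs q₁ (a+n)) ≤ KD * q₁ * (μ * qs q₁ (a+n+1)) := by
          have h7 := mul_le_mul_of_nonneg_left (hq_ratio n)
            (mul_nonneg hKD_pos.le hq₁.le)
          linarith only [h7]
        have e4 : (C * qs q₁ (a+n+1)) * (KB * q₁) + KD * q₁ * (μ * qs q₁ (a+n+1))
            = (C * KB + μ * KD) * (q₁ * qs q₁ (a+n+1)) := by ring
        calc |mp (a+n+1) * Bv n + ℓ (a+n+1) * (Dv n - Piv n)|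
            ≤ |mp (a+n+1) * Bv n| + |ℓ (a+n+1) * (Dv n - Piv n)| := abs_add_le _ _
          _ ≤ (C * qs q₁ (a+n+1)) * (KB * q₁) + KD * q₁ * (μ * qs q₁ (a+n+1)) := by
              linarith only [e1, e2, e3]
          _ = (C * KB + μ * KD) * (q₁ * qs q₁ (a+n+1)) := e4
          _ = KD * q₁ * qs q₁ (a+n+1) := by rw [hKDid]; ring
  -- A as partial sums
  set u : ℕ → ℝ := fun k => mm (a+k+1) * Pv k with hu_def
  have hA_sum : ∀ n, Av n = 1 + ∑ k ∈ Finset.range n, u k := by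
    intro n
    induction n with
    | zero => simpa using hA0
    | succ n ih =>
      rw [hrecA n, ih, Finset.sum_range_succ]
      have hun : u n = mm (a+n+1) * Pv n := rfl
      rw [hun]; ring
  have hu_bound : ∀ k, |u k| ≤ C * K * (qs q₁ (a+k) - qs q₁ (a+k+1)) := by
    intro k
    have t1 : |mm (a+k+1)| ≤ C * qs q₁ (a+k+1) := hmm' _ (by omega)
    have t2 := (hPA k).1
    show |mm (a+k+1) * Pv k| ≤ _
    rw [abs_mul, ← hq_tel (a+k)]
    calc |mm (a+k+1)| * |Pv k| ≤ (C * qs q₁ (a+k+1)) * (K * qs q₁ (a+k)) :=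
        mul_le_mul t1 t2 (abs_nonneg _) (mul_nonneg hC.le (hq_pos _).le)
      _ = C * K * (qs q₁ (a+k) * qs q₁ (a+k+1)) := by ring
  have hu_tail_sum : ∀ n m : ℕ, ∑ k ∈ Finset.range m, |u (k+n)| ≤ C * K * qs q₁ (a+n) := by
    intro n m
    have step : ∀ k : ℕ, |u (k+n)| ≤ C*K*qs q₁ (a+n+k) - C*K*qs q₁ (a+n+(k+1)) := by
      intro k
      have hb := hu_bound (k+n)
      have e1 : a+(k+n) = a+n+k := by omega
      have e2 : a+(k+n)+1 = a+n+(k+1) := by omega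
      rw [e2, e1] at hb
      linarith only [hb]
    calc ∑ k ∈ Finset.range m, |u (k+n)|
        ≤ ∑ k ∈ Finset.range m, (C*K*qs q₁ (a+n+k) - C*K*qs q₁ (a+n+(k+1))) :=
          Finset.sum_le_sum fun k _ => step k
      _ = C*K*qs q₁ (a+n+0) - C*K*qs q₁ (a+n+m) :=
          Finset.sum_range_sub' (fun k => C*K*qs q₁ (a+n+k)) m
      _ ≤ C*K*qs q₁ (a+n) := by
          rw [Nat.add_zero]
          linarith only [mul_nonneg (mul_nonneg hC.le hK_pos.le) (hq_pos (a+n+m)).le]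
  have hu_abs_summable : Summable fun k => |u k| := by
    apply summable_of_sum_range_le (c := C*K*qs q₁ a) (fun k => abs_nonneg _)
    intro n
    simpa using hu_tail_sum 0 n
  have hu_summable : Summable u := Summable.of_abs hu_abs_summable
  set Qb1 : ℝ := 1 + ∑' k, u k with hQb1_def
  have hA_tendsto : Tendsto Av atTop (nhds Qb1) := by
    have h1 := hu_summable.hasSum.tendsto_sum_nat
    have h2 := h1.const_add 1
    exact h2.congr fun n => (hA_sum n).symm
  have hA_tail : ∀ n, |Av n - Qb1| ≤ C * K * qs q₁ (a+n) := by
    intro n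
    have h1 : Av n - Qb1 = -(∑' k, u (k+n)) := by
      rw [hA_sum n, hQb1_def]
      have h2 := Summable.sum_add_tsum_nat_add (f := u) n hu_summable
      linarith only [h2]
    rw [h1, abs_neg]
    have hshift : Summable fun k => u (k+n) := (summable_nat_add_iff n).mpr hu_summable
    have h3 : |∑' k, u (k+n)| ≤ ∑' k, |u (k+n)| := by
      have := norm_tsum_le_tsum_norm (f := fun k => u (k+n))
        (by simpa [Real.norm_eq_abs] using (summable_nat_add_iff n).mpr hu_abs_summable)
      simpa [Real.norm_eq_abs] using this
    have h4 : ∑' k, |u (k+n)| ≤ C*K*qs q₁ (a+n) :=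
      Real.tsum_le_of_sum_range_le (fun k => abs_nonneg _) (hu_tail_sum n)
    linarith only [h3, h4]
  have hQb1_near : |Qb1 - 1| ≤ C * K * q₁ := by
    have h0 := hA_tail 0
    rw [hA0] at h0
    calc |Qb1 - 1| = |(1:ℝ) - Qb1| := (abs_sub_comm _ _).symm
      _ ≤ C*K*qs q₁ (a+0) := h0
      _ ≤ C*K*q₁ := by
          rw [Nat.add_zero]
          exact mul_le_mul_of_nonneg_left hqaq1 (by positivity)
  -- B as partial sums
  set v : ℕ → ℝ := fun k => mm (a+k+1) * Dv k with hv_def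
  have hB_sum : ∀ n, Bv n = mm a + ∑ k ∈ Finset.range n, v k := by
    intro n
    induction n with
    | zero => simpa using hB0
    | succ n ih =>
      rw [hrecB n, ih, Finset.sum_range_succ]
      have hvn : v n = mm (a+n+1) * Dv n := rfl
      rw [hvn]; ring
  have hv_bound : ∀ k, |v k| ≤ C * qs q₁ (a+k+1) * θ^(k+1)
      + C * KD * q₁ * (qs q₁ (a+k) - qs q₁ (a+k+1)) := by
    intro k
    have t1 : |mm (a+k+1)| ≤ C * qs q₁ (a+k+1) := hmm' _ (by omega)
    have hDvn : |Dv k| ≤ θ^(k+1) + KD * q₁ * qs q₁ (a+k) := by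
      have h := abs_sub_abs_le_abs_sub (Dv k) (Piv k)
      linarith only [h, hPi_abs k, (hBD k).2]
    show |mm (a+k+1) * Dv k| ≤ _
    rw [abs_mul]
    have h20 : |mm (a+k+1)| * |Dv k|
        ≤ (C * qs q₁ (a+k+1)) * (θ^(k+1) + KD * q₁ * qs q₁ (a+k)) :=
      mul_le_mul t1 hDvn (abs_nonneg _) (mul_nonneg hC.le (hq_pos _).le)
    have h22 : (C * qs q₁ (a+k+1)) * (KD * q₁ * qs q₁ (a+k))
        = C * KD * q₁ * (qs q₁ (a+k) * qs q₁ (a+k+1)) := by ring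
    have h24 : C * KD * q₁ * (qs q₁ (a+k) * qs q₁ (a+k+1))
        = C * KD * q₁ * (qs q₁ (a+k) - qs q₁ (a+k+1)) := by rw [hq_tel (a+k)]
    linarith only [h20, h22.le, h22.ge, h24.le, h24.ge]
  have hv_tail_sum : ∀ n m : ℕ, ∑ k ∈ Finset.range m, |v (k+n)|
      ≤ (C/(1-θ) + C*KD*q₁) * qs q₁ (a+n) := by
    intro n m
    have step : ∀ k : ℕ, |v (k+n)| ≤ C * qs q₁ (a+n) * θ^k
        + (C*KD*q₁*qs q₁ (a+n+k) - C*KD*q₁*qs q₁ (a+n+(k+1))) := by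
      intro k
      have hb := hv_bound (k+n)
      have e2 : a+(k+n)+1 = a+n+(k+1) := by omega
      have e1 : a+(k+n) = a+n+k := by omega
      rw [e2, e1] at hb
      have g1 : C * qs q₁ (a+n+(k+1)) * θ^(k+n+1) ≤ C * qs q₁ (a+n) * θ^k := by
        refine mul_le_mul ?_ ?_ (pow_nonneg hθ0.le _) (mul_nonneg hC.le (hq_pos _).le)
        · exact mul_le_mul_of_nonneg_left (qs_anti hq₁ h14 (by omega)) hC.le
        · exact pow_le_pow_of_le_one hθ0.le hθ1.le (by omega)
      linarith only [hb, g1]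
    calc ∑ k ∈ Finset.range m, |v (k+n)|
        ≤ ∑ k ∈ Finset.range m, (C * qs q₁ (a+n) * θ^k
            + (C*KD*q₁*qs q₁ (a+n+k) - C*KD*q₁*qs q₁ (a+n+(k+1)))) :=
          Finset.sum_le_sum fun k _ => step k
      _ = (∑ k ∈ Finset.range m, C * qs q₁ (a+n) * θ^k)
          + (∑ k ∈ Finset.range m,
              (C*KD*q₁*qs q₁ (a+n+k) - C*KD*q₁*qs q₁ (a+n+(k+1)))) :=
          Finset.sum_add_distrib
      _ ≤ C * qs q₁ (a+n) * (1/(1-θ))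
          + (C*KD*q₁*qs q₁ (a+n+0) - C*KD*q₁*qs q₁ (a+n+m)) := by
          refine add_le_add ?_ ?_
          · rw [← Finset.mul_sum]
            exact mul_le_mul_of_nonneg_left (geom_partial hθ0.le hθ1 m)
              (mul_nonneg hC.le (hq_pos _).le)
          · exact le_of_eq (Finset.sum_range_sub' (fun k => C*KD*q₁*qs q₁ (a+n+k)) m)
      _ ≤ (C/(1-θ) + C*KD*q₁) * qs q₁ (a+n) := by
          rw [Nat.add_zero]
          have h1 : 0 ≤ C*KD*q₁*qs q₁ (a+n+m) :=
            mul_nonneg (mul_nonneg (mul_nonneg hC.le hKD_pos.le) hq₁.le) (hq_pos _).le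
          have h2 : C * qs q₁ (a+n) * (1/(1-θ)) = (C/(1-θ)) * qs q₁ (a+n) := by ring
          linarith only [h1, h2.le, h2.ge]
  have hv_abs_summable : Summable fun k => |v k| := by
    apply summable_of_sum_range_le (c := (C/(1-θ) + C*KD*q₁) * qs q₁ a)
      (fun k => abs_nonneg _)
    intro n
    simpa using hv_tail_sum 0 n
  have hv_summable : Summable v := Summable.of_abs hv_abs_summable
  set Qb2 : ℝ := mm a + ∑' k, v k with hQb2_def
  have hB_tendsto : Tendsto Bv atTop (nhds Qb2) := by
    have h1 := hv_summable.hasSum.tendsto_sum_nat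
    have h2 := h1.const_add (mm a)
    exact h2.congr fun n => (hB_sum n).symm
  have hB_tail : ∀ n, |Bv n - Qb2| ≤ (C/(1-θ) + C*KD*q₁) * qs q₁ (a+n) := by
    intro n
    have h1 : Bv n - Qb2 = -(∑' k, v (k+n)) := by
      rw [hB_sum n, hQb2_def]
      have h2 := Summable.sum_add_tsum_nat_add (f := v) n hv_summable
      linarith only [h2]
    rw [h1, abs_neg]
    have h3 : |∑' k, v (k+n)| ≤ ∑' k, |v (k+n)| := by
      have := norm_tsum_le_tsum_norm (f := fun k => v (k+n))
        (by simpa [Real.norm_eq_abs] using (summable_nat_add_iff n).mpr hv_abs_summable)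
      simpa [Real.norm_eq_abs] using this
    have h4 : ∑' k, |v (k+n)| ≤ (C/(1-θ) + C*KD*q₁) * qs q₁ (a+n) :=
      Real.tsum_le_of_sum_range_le (fun k => abs_nonneg _) (hv_tail_sum n)
    linarith only [h3, h4]
  -- the series
  set tt : ℕ → ℝ := fun d => (∏ k ∈ Finset.Ico a (a+d), ℓ k) * mm (a+d) with htt_def
  have hIco_abs : ∀ d, |∏ k ∈ Finset.Ico a (a+d), ℓ k| ≤ θ^d := by
    intro d
    induction d with
    | zero => simp
    | succ d ih =>
      rw [show a+(d+1) = (a+d)+1 from rfl,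
        Finset.prod_Ico_succ_top (Nat.le_add_right a d), abs_mul, pow_succ]
      exact mul_le_mul ih (hθstep _ (by omega)) (abs_nonneg _) (pow_nonneg hθ0.le _)
  have htt_bound : ∀ d, |tt d| ≤ (C*q₁) * θ^d := by
    intro d
    have t1 : |mm (a+d)| ≤ C*q₁ :=
      le_trans (hmm' _ (by omega))
        (mul_le_mul_of_nonneg_left (qs_le_self hq₁ h14 (by omega)) hC.le)
    show |(∏ k ∈ Finset.Ico a (a+d), ℓ k) * mm (a+d)| ≤ _
    rw [abs_mul]
    calc |∏ k ∈ Finset.Ico a (a+d), ℓ k| * |mm (a+d)| ≤ θ^d * (C*q₁) :=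
        mul_le_mul (hIco_abs d) t1 (abs_nonneg _) (pow_nonneg hθ0.le _)
      _ = (C*q₁) * θ^d := mul_comm _ _
  have htt_abs_summable : Summable fun d => |tt d| := by
    refine Summable.of_nonneg_of_le (fun d => abs_nonneg _) htt_bound ?_
    exact (summable_geometric_of_lt_one hθ0.le hθ1).mul_left (C*q₁)
  have htt_summable : Summable tt := Summable.of_abs htt_abs_summable
  have hBt : ∀ n, Bv n - ∑ d ∈ Finset.range (n+1), tt d
      = ∑ k ∈ Finset.range n, mm (a+k+1) * (Dv k - Piv k) := by
    intro n
    rw [hB_sum n, Finset.sum_range_succ' tt n]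
    have htt0 : tt 0 = mm a := by
      show (∏ k ∈ Finset.Ico a (a+0), ℓ k) * mm (a+0) = mm a
      rw [Nat.add_zero, Finset.Ico_self, Finset.prod_empty, one_mul]
    have httk : ∀ k, tt (k+1) = Piv k * mm (a+k+1) := by
      intro k
      show (∏ j ∈ Finset.Ico a (a+(k+1)), ℓ j) * mm (a+(k+1)) = _
      rw [show a+(k+1) = (a+k)+1 from rfl, Finset.Ico_add_one_right_eq_Icc]
    have hterm : ∀ k, v k - Piv k * mm (a+k+1) = mm (a+k+1) * (Dv k - Piv k) := by
      intro k
      have hvk : v k = mm (a+k+1) * Dv k := rfl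
      rw [hvk]; ring
    rw [htt0, Finset.sum_congr rfl (fun k _ => httk k)]
    calc mm a + ∑ k ∈ Finset.range n, v k
          - (∑ k ∈ Finset.range n, Piv k * mm (a+k+1) + mm a)
        = ∑ k ∈ Finset.range n, (v k - Piv k * mm (a+k+1)) := by
          rw [Finset.sum_sub_distrib]; ring
      _ = ∑ k ∈ Finset.range n, mm (a+k+1) * (Dv k - Piv k) :=
          Finset.sum_congr rfl (fun k _ => hterm k)
  have hBt_bound : ∀ n, |Bv n - ∑ d ∈ Finset.range (n+1), tt d| ≤ C*KD*q₁*q₁ := by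
    intro n
    rw [hBt n]
    have step : ∀ k : ℕ, |mm (a+k+1) * (Dv k - Piv k)|
        ≤ C*KD*q₁*qs q₁ (a+k) - C*KD*q₁*qs q₁ (a+(k+1)) := by
      intro k
      rw [abs_mul]
      have t1 : |mm (a+k+1)| ≤ C * qs q₁ (a+k+1) := hmm' _ (by omega)
      have h20 : |mm (a+k+1)| * |Dv k - Piv k|
          ≤ (C * qs q₁ (a+k+1)) * (KD * q₁ * qs q₁ (a+k)) :=
        mul_le_mul t1 (hBD k).2 (abs_nonneg _)
          (mul_nonneg hC.le (hq_pos _).le)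
      have h22 : (C * qs q₁ (a+k+1)) * (KD * q₁ * qs q₁ (a+k))
          = C * KD * q₁ * (qs q₁ (a+k) * qs q₁ (a+k+1)) := by ring
      have h24 : C * KD * q₁ * (qs q₁ (a+k) * qs q₁ (a+k+1))
          = C * KD * q₁ * (qs q₁ (a+k) - qs q₁ (a+k+1)) := by rw [hq_tel (a+k)]
      have h25 : C * KD * q₁ * (qs q₁ (a+k) - qs q₁ (a+k+1))
          = C*KD*q₁*qs q₁ (a+k) - C*KD*q₁*qs q₁ (a+(k+1)) := by ring
      linarith only [h20, h22.le, h22.ge, h24.le, h24.ge, h25.le, h25.ge]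
    calc |∑ k ∈ Finset.range n, mm (a+k+1) * (Dv k - Piv k)|
        ≤ ∑ k ∈ Finset.range n, |mm (a+k+1) * (Dv k - Piv k)| :=
          Finset.abs_sum_le_sum_abs _ _
      _ ≤ ∑ k ∈ Finset.range n,
            (C*KD*q₁*qs q₁ (a+k) - C*KD*q₁*qs q₁ (a+(k+1))) :=
          Finset.sum_le_sum fun k _ => step k
      _ = C*KD*q₁*qs q₁ (a+0) - C*KD*q₁*qs q₁ (a+n) :=
          Finset.sum_range_sub' (fun k => C*KD*q₁*qs q₁ (a+k)) n
      _ ≤ C*KD*q₁*q₁ := by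
          rw [Nat.add_zero]
          have h1 : 0 ≤ C*KD*q₁*qs q₁ (a+n) :=
            mul_nonneg (mul_nonneg (mul_nonneg hC.le hKD_pos.le) hq₁.le) (hq_pos _).le
          have h2 : C*KD*q₁*qs q₁ a ≤ C*KD*q₁*q₁ :=
            mul_le_mul_of_nonneg_left hqaq1
              (mul_nonneg (mul_nonneg hC.le hKD_pos.le) hq₁.le)
          linarith only [h1, h2]
  have hS_tendsto : Tendsto (fun n => ∑ d ∈ Finset.range (n+1), tt d) atTop
      (nhds (∑' d, tt d)) :=
    (htt_summable.hasSum.tendsto_sum_nat).comp (tendsto_add_atTop_nat 1)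
  have hQb2_S : |Qb2 - ∑' d, tt d| ≤ C*KD*q₁*q₁ := by
    have hdiff := (hB_tendsto.sub hS_tendsto).abs
    exact le_of_tendsto hdiff (Filter.Eventually.of_forall hBt_bound)
  -- constants vs C₀
  have hCdivθ : 0 ≤ C/(1-θ) := div_nonneg hC.le hθ1'.le
  have hCK_C₀ : C*K ≤ C₀ := by
    rw [hC₀_def]
    have := mul_pos hC hKD_pos
    linarith only [hK_pos, hCdivθ, this, hKD_pos]
  have hK_C₀ : K ≤ C₀ := by
    rw [hC₀_def]
    have := mul_pos hC hKD_pos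
    linarith only [mul_pos hC hK_pos, hCdivθ, this, hKD_pos]
  have hKD_C₀ : KD ≤ C₀ := by
    rw [hC₀_def]
    have := mul_pos hC hKD_pos
    linarith only [mul_pos hC hK_pos, hK_pos, hCdivθ, this]
  have hBtail_C₀ : C/(1-θ) + C*KD*q₁ ≤ C₀ := by
    rw [hC₀_def]
    have h1 : C*KD*q₁ ≤ C*KD := by
      have h2 : (C*KD)*q₁ ≤ (C*KD)*1 :=
        mul_le_mul_of_nonneg_left (by linarith) (mul_nonneg hC.le hKD_pos.le)
      linarith only [h2]
    linarith only [mul_pos hC hK_pos, hK_pos, hKD_pos, h1]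
  have hCKD_C₀ : C*KD ≤ C₀ := by
    rw [hC₀_def]
    linarith only [mul_pos hC hK_pos, hK_pos, hCdivθ, hKD_pos]
  refine ⟨Qb1, Qb2, ?_, ?_, ?_, ?_, ?_, ?_⟩
  · -- Tendsto entry 00
    have hcomp := hA_tendsto.comp (tendsto_sub_atTop_nat a)
    refine hcomp.congr' ?_
    filter_upwards [eventually_ge_atTop a] with j hj
    have hje : a + (j - a) = j := by omega
    show Av (j - a) = Qmat ℓ mp mm j a 0 0
    rw [hAv_def]
    simp only []
    rw [hje]
  · have hcomp := hB_tendsto.comp (tendsto_sub_atTop_nat a)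
    refine hcomp.congr' ?_
    filter_upwards [eventually_ge_atTop a] with j hj
    have hje : a + (j - a) = j := by omega
    show Bv (j - a) = Qmat ℓ mp mm j a 0 1
    rw [hBv_def]
    simp only []
    rw [hje]
  · exact htt_abs_summable
  · -- |Qb1 - 1| ≤ C₀ √q₁
    have hs0 : 0 ≤ Real.sqrt q₁ := Real.sqrt_nonneg _
    have hs1 : Real.sqrt q₁ ≤ 1 := by
      rw [show (1:ℝ) = Real.sqrt 1 from (Real.sqrt_one).symm]
      exact Real.sqrt_le_sqrt (by linarith)
    have hsq : Real.sqrt q₁ * Real.sqrt q₁ = q₁ := Real.mul_self_sqrt hq₁.le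
    calc |Qb1 - 1| ≤ C*K*q₁ := hQb1_near
      _ = C*K*(Real.sqrt q₁ * Real.sqrt q₁) := by rw [hsq]
      _ ≤ C*K*(1*Real.sqrt q₁) := by
          refine mul_le_mul_of_nonneg_left ?_ (mul_nonneg hC.le hK_pos.le)
          exact mul_le_mul_of_nonneg_right hs1 hs0
      _ = (C*K)*Real.sqrt q₁ := by ring
      _ ≤ C₀*Real.sqrt q₁ := mul_le_mul_of_nonneg_right hCK_C₀ hs0
  · -- |Qb2 - series| ≤ C₀ q₁^{3/2}
    have hrp : q₁*q₁ ≤ q₁ ^ ((3:ℝ)/2) := by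
      have h2 : q₁*q₁ = q₁ ^ ((2:ℝ)) := by
        rw [show ((2:ℝ)) = ((2:ℕ):ℝ) by norm_num, Real.rpow_natCast]
        ring
      rw [h2]
      exact Real.rpow_le_rpow_of_exponent_ge hq₁ (by linarith) (by norm_num)
    have hrp0 : 0 ≤ q₁ ^ ((3:ℝ)/2) := Real.rpow_nonneg hq₁.le _
    calc |Qb2 - ∑' d, tt d| ≤ C*KD*q₁*q₁ := hQb2_S
      _ = (C*KD)*(q₁*q₁) := by ring
      _ ≤ (C*KD)*(q₁ ^ ((3:ℝ)/2)) :=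
          mul_le_mul_of_nonneg_left hrp (mul_nonneg hC.le hKD_pos.le)
      _ ≤ C₀ * q₁ ^ ((3:ℝ)/2) := mul_le_mul_of_nonneg_right hCKD_C₀ hrp0
  · intro j hj
    obtain ⟨n, rfl⟩ : ∃ n, j = a + n := ⟨j - a, by omega⟩
    refine ⟨?_, ?_, ?_, ?_⟩
    · show |Av n - Qb1| ≤ C₀ * qs q₁ (a+n)
      calc |Av n - Qb1| ≤ C*K*qs q₁ (a+n) := hA_tail n
        _ ≤ C₀ * qs q₁ (a+n) := mul_le_mul_of_nonneg_right hCK_C₀ (hq_pos _).le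
    · show |Bv n - Qb2| ≤ C₀ * qs q₁ (a+n)
      calc |Bv n - Qb2| ≤ (C/(1-θ) + C*KD*q₁) * qs q₁ (a+n) := hB_tail n
        _ ≤ C₀ * qs q₁ (a+n) := mul_le_mul_of_nonneg_right hBtail_C₀ (hq_pos _).le
    · show |Pv n| ≤ C₀ * qs q₁ (a+n)
      calc |Pv n| ≤ K * qs q₁ (a+n) := (hPA n).1
        _ ≤ C₀ * qs q₁ (a+n) := mul_le_mul_of_nonneg_right hK_C₀ (hq_pos _).le
    · show |Dv n - Piv n| ≤ C₀ * q₁ * qs q₁ (a+n)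
      calc |Dv n - Piv n| ≤ KD * q₁ * qs q₁ (a+n) := (hBD n).2
        _ ≤ C₀ * q₁ * qs q₁ (a+n) := by
            refine mul_le_mul_of_nonneg_right ?_ (hq_pos _).le
            exact mul_le_mul_of_nonneg_right hKD_C₀ hq₁.le
end
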